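/- arXiv:1904.07095 — 11 statements merged into one kernel-verified Lean document; each statement's English description precedes it below -/
import Mathlib

section
/- The density h(x,y) = 1/(xy) is a fixed point of the transfer operator of the slow triangle map S, i.e. for all (x,y) in the triangle with 1 ≥ x ≥ y > 0, one has (1/(1+y)^3)·h(1/(1+y), x/(1+y)) + (1/(1+y)^3)·h(x/(1+y), y/(1+y)) = h(x,y). -/
/-- The density `h(x,y) = 1/(xy)` is a fixed point of the transfer operator of the
slow triangle map `S`. -/
theorem density_fixed_point_of_transfer_operator
    (h : ℝ → ℝ → ℝ) (hdef : ∀ x y : ℝ, h x y = 1 / (x * y))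
    (x y : ℝ) (h1 : 1 ≥ x) (h2 : x ≥ y) (h3 : y > 0) :
    (1 / (1 + y) ^ 3) * h (1 / (1 + y)) (x / (1 + y))
      + (1 / (1 + y) ^ 3) * h (x / (1 + y)) (y / (1 + y)) = h x y := by
  have hx : x > 0 := lt_of_lt_of_le h3 h2
  have hy1 : (1 : ℝ) + y > 0 := by linarith
  simp only [hdef]
  field_simp
  ring
end

section
/- The triangle map T is the jump transformation of the slow map S over Γ₀: for every (x,y) ∈ △ₖ (k ≥ 0), one has T(x,y) = S^{k+1}(x,y), where the first k iterates of S applied to (x,y) lie in Γ₁ and the (k)-th iterate lies in Γ₀. -/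
/-- The partition element `△ₖ` of the triangle. -/
def triDelta (k : ℕ) : Set (ℝ × ℝ) :=
  {p : ℝ × ℝ | 1 ≥ p.1 ∧ p.1 ≥ p.2 ∧ p.2 > 0 ∧
    1 - p.1 - (k : ℝ) * p.2 ≥ 0 ∧ 1 - p.1 - ((k : ℝ) + 1) * p.2 < 0}

/-- `Γ₀ = △₀`. -/
def Gamma0 : Set (ℝ × ℝ) := {p : ℝ × ℝ | 1 ≥ p.1 ∧ p.1 ≥ p.2 ∧ p.2 > 1 - p.1}

/-- `Γ₁`. -/
def Gamma1 : Set (ℝ × ℝ) := {p : ℝ × ℝ | 1 - p.2 ≥ p.1 ∧ p.1 ≥ p.2 ∧ p.2 ≥ 0}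

/-- The slow triangle map `S`. -/
noncomputable def slowMap (p : ℝ × ℝ) : ℝ × ℝ :=
  if p.1 + p.2 > 1 then (p.2 / p.1, (1 - p.1) / p.1)
  else (p.1 / (1 - p.2), p.2 / (1 - p.2))

/-- The triangle map `T` is the jump transformation of the slow map `S` over `Γ₀`:
for `(x,y) ∈ △ₖ` we have `T(x,y) = S^{k+1}(x,y)`, the iterates `S^j(x,y)` for `j < k`
lie in `Γ₁` and the `k`-th iterate lies in `Γ₀`. -/
theorem triangle_map_is_jump_transformation
    (T : ℝ × ℝ → ℝ × ℝ)
    (hT : ∀ k : ℕ, ∀ p ∈ triDelta k,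
      T p = (p.2 / p.1, (1 - p.1 - (k : ℝ) * p.2) / p.1)) :
    ∀ k : ℕ, ∀ p ∈ triDelta k,
      T p = slowMap^[k + 1] p ∧
      (∀ j : ℕ, j < k → slowMap^[j] p ∈ Gamma1) ∧
      slowMap^[k] p ∈ Gamma0 := by
  intro k p hp
  obtain ⟨h1, h2, h3, h4, h5⟩ := hp
  have hx : (0:ℝ) < p.1 := lt_of_lt_of_le h3 h2
  have hky : (k : ℝ) * p.2 ≤ 1 - p.1 := by linarith
  -- the key iteration formula
  have key : ∀ j : ℕ, j ≤ k →
      slowMap^[j] p = (p.1 / (1 - (j : ℝ) * p.2), p.2 / (1 - (j : ℝ) * p.2)) := by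
    intro j hj
    induction j with
    | zero => simp
    | succ j ih =>
      have hjk : j ≤ k := Nat.le_of_succ_le hj
      have hjle : (j : ℝ) ≤ k := Nat.cast_le.mpr hjk
      have hj1le : (j : ℝ) + 1 ≤ k := by exact_mod_cast hj
      have hjy : (j : ℝ) * p.2 ≤ (k : ℝ) * p.2 := by nlinarith
      have hj1y : ((j : ℝ) + 1) * p.2 ≤ (k : ℝ) * p.2 := by nlinarith
      have hpos : (0:ℝ) < 1 - (j : ℝ) * p.2 := by linarith
      have hpos1 : (0:ℝ) < 1 - ((j : ℝ) + 1) * p.2 := by linarith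
      rw [Function.iterate_succ_apply', ih hjk, slowMap]
      have hcond : ¬ (p.1 / (1 - (j : ℝ) * p.2) + p.2 / (1 - (j : ℝ) * p.2) > 1) := by
        rw [not_lt, ← add_div, div_le_one hpos]
        linarith
      rw [if_neg hcond]
      push_cast
      have h2' : 1 - p.2 / (1 - (j : ℝ) * p.2) = (1 - ((j:ℝ)+1) * p.2) / (1 - (j : ℝ) * p.2) := by
        field_simp [hpos.ne', (show (1:ℝ) - p.2 * j ≠ 0 by rw [mul_comm]; exact hpos.ne')]; ring
      simp only [h2', Prod.mk.injEq]
      have e1 : (1 - (j:ℝ) * p.2) ≠ 0 := hpos.ne'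
      have e2 : (1 - ((j:ℝ) + 1) * p.2) ≠ 0 := hpos1.ne'
      constructor <;> (rw [div_div_div_cancel_right₀ e1])
  have hkk := key k le_rfl
  have hkpos : (0:ℝ) < 1 - (k : ℝ) * p.2 := by linarith
  refine ⟨?_, ?_, ?_⟩
  · rw [hT k p ⟨h1, h2, h3, h4, h5⟩, Function.iterate_succ_apply', hkk, slowMap]
    have hcond : p.1 / (1 - (k : ℝ) * p.2) + p.2 / (1 - (k : ℝ) * p.2) > 1 := by
      rw [← add_div, gt_iff_lt, lt_div_iff₀ hkpos]
      linarith
    rw [if_pos hcond]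
    simp only [Prod.mk.injEq]
    constructor <;> (field_simp [hkpos.ne', (show (1:ℝ) - p.2 * k ≠ 0 by rw [mul_comm]; exact hkpos.ne')]; try ring)
  · intro j hjk'
    have hjk : j ≤ k := le_of_lt hjk'
    have hjle : (j : ℝ) ≤ k := Nat.cast_le.mpr hjk
    have hj1le : (j : ℝ) + 1 ≤ k := by exact_mod_cast hjk'
    have hjy : (j : ℝ) * p.2 ≤ (k : ℝ) * p.2 := by nlinarith
    have hj1y : ((j : ℝ) + 1) * p.2 ≤ (k : ℝ) * p.2 := by nlinarith
    have hpos : (0:ℝ) < 1 - (j : ℝ) * p.2 := by linarith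
    rw [key j hjk]
    simp only [Gamma1, Set.mem_setOf_eq]
    refine ⟨?_, ?_, ?_⟩
    · rw [ge_iff_le, le_sub_iff_add_le, ← add_div, div_le_one hpos]; linarith
    · gcongr
    · positivity
  · rw [hkk]
    simp only [Gamma0, Set.mem_setOf_eq]
    refine ⟨?_, ?_, ?_⟩
    · rw [ge_iff_le, div_le_one hkpos]; linarith
    · gcongr
    · rw [gt_iff_lt, sub_lt_iff_lt_add, ← add_div, lt_div_iff₀ hkpos]
      linarith
end

section
/- For each k ≥ 1, the slow triangle map S maps △ₖ bijectively onto △_{k−1}, i.e. S(△ₖ) = △_{k−1}. -/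
lemma tri_facts (k : ℕ) (hk : 1 ≤ k) {p : ℝ × ℝ} (hp : p ∈ triDelta k) :
    p.2 < 1 ∧ slowMap p = (p.1 / (1 - p.2), p.2 / (1 - p.2)) := by
  obtain ⟨h1, h2, h3, h4, h5⟩ := hp
  have hk' : (1:ℝ) ≤ k := by exact_mod_cast hk
  have hsum : p.1 + p.2 ≤ 1 := by nlinarith
  have hy : p.2 < 1 := by nlinarith
  refine ⟨hy, ?_⟩
  simp only [slowMap, if_neg (show ¬ (p.1 + p.2 > 1) from not_lt.mpr (by linarith))]

/-- For each `k ≥ 1` the slow triangle map `S` maps `△ₖ` bijectively onto `△_{k-1}`. -/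
theorem slowMap_maps_triDelta_bijectively :
    ∀ k : ℕ, 1 ≤ k →
      Set.InjOn slowMap (triDelta k) ∧ slowMap '' triDelta k = triDelta (k - 1) := by
  intro k hk
  have hk' : (1:ℝ) ≤ k := by exact_mod_cast hk
  have hcast : ((k - 1 : ℕ) : ℝ) = (k : ℝ) - 1 := by
    push_cast [Nat.cast_sub hk]; ring
  constructor
  · intro p hp q hq h
    obtain ⟨hp1, hp2, hp3, hp4, hp5⟩ := hp
    obtain ⟨hq1, hq2, hq3, hq4, hq5⟩ := hq
    have hpd : 0 < 1 - p.2 := by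
      have := (tri_facts k hk ⟨hp1, hp2, hp3, hp4, hp5⟩).1; linarith
    have hqd : 0 < 1 - q.2 := by
      have := (tri_facts k hk ⟨hq1, hq2, hq3, hq4, hq5⟩).1; linarith
    rw [(tri_facts k hk ⟨hp1, hp2, hp3, hp4, hp5⟩).2,
        (tri_facts k hk ⟨hq1, hq2, hq3, hq4, hq5⟩).2, Prod.mk.injEq] at h
    obtain ⟨hx, hy⟩ := h
    have hy2 : p.2 = q.2 := by
      field_simp at hy; nlinarith
    have hx2 : p.1 = q.1 := by
      rw [hy2] at hx
      field_simp at hx; exact hx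
    exact Prod.ext hx2 hy2
  · ext u
    constructor
    · rintro ⟨p, hp, rfl⟩
      obtain ⟨hy1, hS⟩ := tri_facts k hk hp
      obtain ⟨h1, h2, h3, h4, h5⟩ := hp
      have hd : 0 < 1 - p.2 := by linarith
      rw [hS]
      refine ⟨?_, ?_, ?_, ?_, ?_⟩
      · rw [ge_iff_le, div_le_one hd]; nlinarith
      · exact div_le_div_of_nonneg_right h2 hd.le
      · positivity
      · rw [hcast]
        have hrw : 1 - p.1 / (1 - p.2) - ((k:ℝ) - 1) * (p.2 / (1 - p.2))
            = (1 - p.1 - (k:ℝ) * p.2) / (1 - p.2) := by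
          field_simp; ring
        show (1:ℝ) - _ - _ ≥ 0
        rw [hrw]
        exact div_nonneg h4 hd.le
      · rw [hcast]
        have hrw : 1 - p.1 / (1 - p.2) - (((k:ℝ) - 1) + 1) * (p.2 / (1 - p.2))
            = (1 - p.1 - ((k:ℝ) + 1) * p.2 + p.2 * ((k:ℝ) + 1) - p.2 * ((k:ℝ) + 1)) / (1 - p.2) := by
          field_simp; ring
        show (1:ℝ) - _ - _ < 0
        rw [hrw]
        apply div_neg_of_neg_of_pos _ hd
        linarith
    · rintro ⟨h1, h2, h3, h4, h5⟩
      rw [hcast] at h4 h5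
      have hv : 0 < 1 + u.2 := by linarith
      refine ⟨(u.1 / (1 + u.2), u.2 / (1 + u.2)), ⟨?_, ?_, ?_, ?_, ?_⟩, ?_⟩
      · rw [ge_iff_le, div_le_one hv]; linarith
      · exact div_le_div_of_nonneg_right h2 hv.le
      · positivity
      · have hrw : 1 - u.1 / (1 + u.2) - (k:ℝ) * (u.2 / (1 + u.2))
            = (1 - u.1 - ((k:ℝ) - 1) * u.2) / (1 + u.2) := by
          field_simp; ring
        show (1:ℝ) - _ - _ ≥ 0
        rw [hrw]
        exact div_nonneg h4 hv.le
      · have hrw : 1 - u.1 / (1 + u.2) - ((k:ℝ) + 1) * (u.2 / (1 + u.2))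
            = (1 - u.1 - (k:ℝ) * u.2) / (1 + u.2) := by
          field_simp; ring
        show (1:ℝ) - _ - _ < 0
        rw [hrw]
        exact div_neg_of_neg_of_pos (by linarith) hv
      · have hne : (1:ℝ) + u.2 ≠ 0 := by linarith
        have hsum : u.1 / (1 + u.2) + u.2 / (1 + u.2) ≤ 1 := by
          rw [← add_div, div_le_one hv]; linarith
        simp only [slowMap, if_neg (not_lt.mpr hsum)]
        have h1v : 1 - u.2 / (1 + u.2) = 1 / (1 + u.2) := by field_simp; ring
        rw [h1v]
        ext <;> simp <;> field_simp
end

section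
/- The change of coordinates Ψ(x,y) = (y/x, (1−x)/y) conjugates the slow triangle map S to the map F on the strip Σ = (0,1] × [0,∞) given by F(u,v) = (v, (1/v)(1/u − 1)) if v < 1 and F(u,v) = (u, v−1) if v ≥ 1; that is, Ψ∘S = F∘Ψ on the interior of the triangle (away from the boundary lines y = 0 and x = y). -/
/-- The map `F` on the strip `Σ = (0,1] × [0,∞)`. -/
noncomputable def stripMap (q : ℝ × ℝ) : ℝ × ℝ :=
  if q.2 < 1 then (q.2, (1 / q.2) * (1 / q.1 - 1))
  else (q.1, q.2 - 1)

/-- The change of coordinates `Ψ(x,y) = (y/x, (1-x)/y)`. -/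
noncomputable def stripCoord (p : ℝ × ℝ) : ℝ × ℝ :=
  (p.2 / p.1, (1 - p.1) / p.2)

/-- `Ψ` conjugates the slow triangle map `S` to the strip map `F` on the interior
of the triangle. -/
theorem strip_conjugacy :
    ∀ p : ℝ × ℝ, 1 > p.1 → p.1 > p.2 → p.2 > 0 →
      stripCoord (slowMap p) = stripMap (stripCoord p) := by
  rintro ⟨x, y⟩ hx hxy hy
  simp only at hx hxy hy
  have hx0 : (0:ℝ) < x := hy.trans hxy
  have hx1 : (0:ℝ) < 1 - x := by linarith
  simp only [slowMap, stripMap, stripCoord]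
  by_cases h : x + y > 1
  · rw [if_pos h]
    have h1 : (1 - x) / y < 1 := by
      rw [div_lt_one hy]; linarith
    simp only [h1, ↓reduceIte]
    simp only [Prod.mk.injEq]
    constructor
    · field_simp
    · field_simp
  · rw [if_neg h]
    have h1 : ¬ ((1 - x) / y < 1) := by
      rw [not_lt, le_div_iff₀ hy]; linarith [not_lt.mp h]
    simp only [h1, ↓reduceIte]
    have hy1 : (0:ℝ) < 1 - y := by linarith
    simp only [Prod.mk.injEq]
    constructor
    · field_simp
    · field_simp
      ring
end

section
/- Let ℓ denote the ℓ¹ norm on ℝ³ and for a nonzero vector v with nonnegative components let P_v = v/‖v‖₁. Then for any nonzero v, w ∈ ℝ³ with nonnegative components, ‖v × w‖₂ ≤ √3 · ‖v‖₂ · ‖w‖₂ · ‖P_v − P_w‖₂. -/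
/-- Euclidean norm on `ℝ³` (as `Fin 3 → ℝ`). -/
noncomputable def euclNorm3 (x : Fin 3 → ℝ) : ℝ :=
  Real.sqrt (x 0 ^ 2 + x 1 ^ 2 + x 2 ^ 2)

/-- `ℓ¹` norm on `ℝ³`. -/
def l1Norm3 (x : Fin 3 → ℝ) : ℝ := |x 0| + |x 1| + |x 2|

/-- Cross product in `ℝ³`. -/
def cross3 (v w : Fin 3 → ℝ) : Fin 3 → ℝ :=
  ![v 1 * w 2 - v 2 * w 1, v 2 * w 0 - v 0 * w 2, v 0 * w 1 - v 1 * w 0]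

set_option maxHeartbeats 1000000 in
lemma key_sq (v0 v1 v2 w0 w1 w2 : ℝ)
    (h0 : 0 ≤ v0) (h1 : 0 ≤ v1) (h2 : 0 ≤ v2)
    (g0 : 0 ≤ w0) (g1 : 0 ≤ w1) (g2 : 0 ≤ w2)
    (ha : 0 < v0 + v1 + v2) (hb : 0 < w0 + w1 + w2) :
    (v1 * w2 - v2 * w1) ^ 2 + (v2 * w0 - v0 * w2) ^ 2 + (v0 * w1 - v1 * w0) ^ 2 ≤
      3 * (v0 ^ 2 + v1 ^ 2 + v2 ^ 2) * (w0 ^ 2 + w1 ^ 2 + w2 ^ 2) *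
        ((v0 / (v0 + v1 + v2) - w0 / (w0 + w1 + w2)) ^ 2 +
         (v1 / (v0 + v1 + v2) - w1 / (w0 + w1 + w2)) ^ 2 +
         (v2 / (v0 + v1 + v2) - w2 / (w0 + w1 + w2)) ^ 2) := by
  set a := v0 + v1 + v2 with ha'
  set b := w0 + w1 + w2 with hb'
  have hd : ∀ x y : ℝ, x / a - y / b = (b * x - a * y) / (a * b) := by
    intro x y; field_simp
  rw [hd, hd, hd]
  rw [div_pow, div_pow, div_pow, ← add_div, ← add_div,
    ← mul_div_assoc, le_div_iff₀ (by positivity)]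
  have step1 : a ^ 2 * ((v1 * w2 - v2 * w1) ^ 2 + (v2 * w0 - v0 * w2) ^ 2 +
      (v0 * w1 - v1 * w0) ^ 2) ≤
      (v0 ^ 2 + v1 ^ 2 + v2 ^ 2) * ((b * v0 - a * w0) ^ 2 + (b * v1 - a * w1) ^ 2 + (b * v2 - a * w2) ^ 2) := by
    nlinarith [sq_nonneg (v0 * (b * v0 - a * w0) + v1 * (b * v1 - a * w1) + v2 * (b * v2 - a * w2))]
  have step2 : b ^ 2 ≤ 3 * (w0 ^ 2 + w1 ^ 2 + w2 ^ 2) := by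
    nlinarith [sq_nonneg (w0 - w1), sq_nonneg (w1 - w2), sq_nonneg (w0 - w2)]
  have hSvSu : 0 ≤ (v0 ^ 2 + v1 ^ 2 + v2 ^ 2) * ((b * v0 - a * w0) ^ 2 + (b * v1 - a * w1) ^ 2 + (b * v2 - a * w2) ^ 2) := by positivity
  nlinarith [mul_le_mul_of_nonneg_left step1 (sq_nonneg b),
    mul_le_mul_of_nonneg_right step2 hSvSu]

lemma l1_pos (x : Fin 3 → ℝ) (hx : ∀ i, 0 ≤ x i) (hx0 : x ≠ 0) : 0 < l1Norm3 x := by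
  have h0 : 0 ≤ l1Norm3 x := by unfold l1Norm3; positivity
  rcases h0.lt_or_eq with h | h
  · exact h
  · exfalso
    apply hx0
    have e : |x 0| = 0 ∧ |x 1| = 0 ∧ |x 2| = 0 := by
      unfold l1Norm3 at h
      refine ⟨?_, ?_, ?_⟩ <;>
        nlinarith [abs_nonneg (x 0), abs_nonneg (x 1), abs_nonneg (x 2)]
    funext i
    fin_cases i
    · simpa [abs_eq_zero] using e.1
    · simpa [abs_eq_zero] using e.2.1
    · simpa [abs_eq_zero] using e.2.2

/-- For nonzero vectors `v, w ∈ ℝ³` with nonnegative components,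
`‖v × w‖₂ ≤ √3 ‖v‖₂ ‖w‖₂ ‖P_v - P_w‖₂` where `P_v = v / ‖v‖₁`. -/
theorem cross_product_estimate
    (v w : Fin 3 → ℝ) (hv : ∀ i, 0 ≤ v i) (hw : ∀ i, 0 ≤ w i)
    (hv0 : v ≠ 0) (hw0 : w ≠ 0) :
    euclNorm3 (cross3 v w) ≤
      Real.sqrt 3 * euclNorm3 v * euclNorm3 w *
        euclNorm3 (fun i => v i / l1Norm3 v - w i / l1Norm3 w) := by
  have hav : l1Norm3 v = v 0 + v 1 + v 2 := by
    unfold l1Norm3; rw [abs_of_nonneg (hv 0), abs_of_nonneg (hv 1), abs_of_nonneg (hv 2)]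
  have haw : l1Norm3 w = w 0 + w 1 + w 2 := by
    unfold l1Norm3; rw [abs_of_nonneg (hw 0), abs_of_nonneg (hw 1), abs_of_nonneg (hw 2)]
  have hva : 0 < v 0 + v 1 + v 2 := hav ▸ l1_pos v hv hv0
  have hwa : 0 < w 0 + w 1 + w 2 := haw ▸ l1_pos w hw hw0
  unfold euclNorm3
  have hc0 : cross3 v w 0 = v 1 * w 2 - v 2 * w 1 := rfl
  have hc1 : cross3 v w 1 = v 2 * w 0 - v 0 * w 2 := rfl
  have hc2 : cross3 v w 2 = v 0 * w 1 - v 1 * w 0 := rfl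
  rw [hc0, hc1, hc2, hav, haw]
  set Sv := v 0 ^ 2 + v 1 ^ 2 + v 2 ^ 2 with hSv
  set Sw := w 0 ^ 2 + w 1 ^ 2 + w 2 ^ 2 with hSw
  have hSvn : 0 ≤ Sv := by positivity
  have hSwn : 0 ≤ Sw := by positivity
  rw [show Real.sqrt 3 * Real.sqrt Sv * Real.sqrt Sw = Real.sqrt (3 * Sv * Sw) by
    rw [Real.sqrt_mul (by positivity), Real.sqrt_mul (by norm_num)]]
  rw [← Real.sqrt_mul (by positivity)]
  exact Real.sqrt_le_sqrt
    (key_sq (v 0) (v 1) (v 2) (w 0) (w 1) (w 2) (hv 0) (hv 1) (hv 2)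
      (hw 0) (hw 1) (hw 2) hva hwa)
end

section
/- The mediant operation on pairs of fractions with common denominators is preserved by the maps φ₀ and φ₁: for rational pairs (p/q, r/q) and (p'/q', r'/q') in the domain of φ₀, φ₀((p/q, r/q) ⊕ (p'/q', r'/q')) = φ₀(p/q, r/q) ⊕ φ₀(p'/q', r'/q'), and similarly for φ₁. -/
/-- The local inverse `φ₀` (on rational points). -/
def phi0 (z : ℚ × ℚ) : ℚ × ℚ := (1 / (1 + z.2), z.1 / (1 + z.2))

/-- The local inverse `φ₁` (on rational points). -/
def phi1 (z : ℚ × ℚ) : ℚ × ℚ := (z.1 / (1 + z.2), z.2 / (1 + z.2))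

/-- The mediant operation on pairs of fractions with common denominators is preserved
by the maps `φ₀` and `φ₁`: in projective coordinates,
`φ₀(p/q, r/q) = (q/(r+q), p/(r+q))` and `φ₁(p/q, r/q) = (p/(r+q), r/(r+q))`, and the
image of the mediant is the mediant of the images. -/
theorem phi_preserves_mediant
    (p r q p' r' q' : ℤ)
    (hq : 0 < q) (hq' : 0 < q')
    (hr : 0 ≤ r) (hrp : r ≤ p) (hpq : p ≤ q)
    (hr' : 0 ≤ r') (hrp' : r' ≤ p') (hpq' : p' ≤ q') :
    phi0 (((p + p' : ℤ) : ℚ) / ((q + q' : ℤ) : ℚ),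
          ((r + r' : ℤ) : ℚ) / ((q + q' : ℤ) : ℚ)) =
      (((q + q' : ℤ) : ℚ) / (((r + q) + (r' + q') : ℤ) : ℚ),
       ((p + p' : ℤ) : ℚ) / (((r + q) + (r' + q') : ℤ) : ℚ)) ∧
    phi1 (((p + p' : ℤ) : ℚ) / ((q + q' : ℤ) : ℚ),
          ((r + r' : ℤ) : ℚ) / ((q + q' : ℤ) : ℚ)) =
      (((p + p' : ℤ) : ℚ) / (((r + q) + (r' + q') : ℤ) : ℚ),
       ((r + r' : ℤ) : ℚ) / (((r + q) + (r' + q') : ℤ) : ℚ)) := by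
  have hQ : ((q + q' : ℤ) : ℚ) ≠ 0 := by
    exact_mod_cast (by omega : (q + q' : ℤ) ≠ 0)
  have hD : (((r + q) + (r' + q') : ℤ) : ℚ) ≠ 0 := by
    exact_mod_cast (by omega : ((r + q) + (r' + q') : ℤ) ≠ 0)
  constructor <;> simp only [phi0, phi1, Prod.mk.injEq] <;>
    constructor <;> field_simp <;> push_cast <;> ring_nf <;> tauto
end

section
/- For all n ≥ 0, the n-th level of the counterimages tree of the modified slow triangle map satisfies #𝓑ₙ = 3·2ⁿ and #𝓘ₙ = n·2^{n−1}, where 𝓑ₙ and 𝓘ₙ are the boundary and interior points of level n; hence #𝓣ₙ = 3·2ⁿ + n·2^{n−1}. Moreover the points of 𝓑ₙ are equally distributed, 2ⁿ on each of the three sides of the triangle. -/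
/-- Interior points of the triangle `{1 ≥ x ≥ y ≥ 0}`. -/
def isInterior (z : ℚ × ℚ) : Prop := 0 < z.2 ∧ z.2 < z.1 ∧ z.1 < 1

/-- Points generated at the next level of the tree (rules R1, R2 via `φ₁`, R4). -/
def levelUp (P : Set (ℚ × ℚ)) : Set (ℚ × ℚ) :=
  phi0 '' {z ∈ P | isInterior z} ∪ phi1 '' {z ∈ P | isInterior z} ∪
  phi1 '' {z ∈ P | z.1 = z.2} ∪
  phi0 '' {z ∈ P | z.1 = 1} ∪ phi1 '' {z ∈ P | z.1 = 1}

/-- Closure of a level under the same-level rules R2 (via `φ₂ : (x,x) ↦ (x,0)`)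
and R3 (`(x,0) ↦ (1,x)`). -/
def sameLevelClosure (Q : Set (ℚ × ℚ)) : Set (ℚ × ℚ) :=
  Q ∪ (fun z : ℚ × ℚ => (z.1, (0 : ℚ))) '' {z ∈ Q | z.1 = z.2} ∪
  (fun z : ℚ × ℚ => ((1 : ℚ), z.1)) '' {z ∈ Q | z.2 = 0} ∪
  (fun z : ℚ × ℚ => ((1 : ℚ), z.1)) ''
    ((fun z : ℚ × ℚ => (z.1, (0 : ℚ))) '' {z ∈ Q | z.1 = z.2})

/-- The levels `𝓣ₙ` (for `n ≥ 0`) of the triangular tree. -/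
def treeLevel : ℕ → Set (ℚ × ℚ)
  | 0 => {(1/2, 0), (1, 1/2), (1/2, 1/2)}
  | n + 1 => sameLevelClosure (levelUp (treeLevel n))




lemma phi0_int {z : ℚ × ℚ} (h : isInterior z) :
    isInterior (phi0 z) ∧ 1 < (phi0 z).1 + (phi0 z).2 := by
  obtain ⟨h1, h2, h3⟩ := h
  have hp : (0:ℚ) < 1 + z.2 := by linarith
  have hx : (0:ℚ) < z.1 := lt_trans h1 h2
  simp only [phi0, isInterior]
  refine ⟨⟨by positivity, ?_, ?_⟩, ?_⟩
  · rw [div_lt_div_iff₀ hp hp]; nlinarith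
  · rw [div_lt_one hp]; linarith
  · rw [← add_div, lt_div_iff₀ hp]; nlinarith

lemma phi1_int {z : ℚ × ℚ} (h : isInterior z) :
    isInterior (phi1 z) ∧ (phi1 z).1 + (phi1 z).2 < 1 := by
  obtain ⟨h1, h2, h3⟩ := h
  have hp : (0:ℚ) < 1 + z.2 := by linarith
  simp only [phi1, isInterior]
  refine ⟨⟨by positivity, ?_, ?_⟩, ?_⟩
  · rw [div_lt_div_iff₀ hp hp]; nlinarith
  · rw [div_lt_one hp]; linarith
  · rw [← add_div, div_lt_one hp]; nlinarith

lemma phi1_diag {z : ℚ × ℚ} (h : z.1 = z.2) (h0 : 0 < z.1) (h1 : z.1 < 1) :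
    (phi1 z).1 = (phi1 z).2 ∧ 0 < (phi1 z).1 ∧ (phi1 z).1 < 1/2 := by
  have hp : (0:ℚ) < 1 + z.2 := by linarith
  simp only [phi1]
  refine ⟨by rw [h], by positivity, ?_⟩
  rw [div_lt_div_iff₀ hp (by norm_num)]; nlinarith

lemma phi0_right {z : ℚ × ℚ} (h : z.1 = 1) (h0 : 0 < z.2) (h1 : z.2 < 1) :
    (phi0 z).1 = (phi0 z).2 ∧ 1/2 < (phi0 z).1 ∧ (phi0 z).1 < 1 := by
  have hp : (0:ℚ) < 1 + z.2 := by linarith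
  simp only [phi0]
  refine ⟨by rw [h], ?_, ?_⟩
  · rw [div_lt_div_iff₀ (by norm_num) hp]; nlinarith
  · rw [div_lt_one hp]; linarith

lemma phi1_right {z : ℚ × ℚ} (h : z.1 = 1) (h0 : 0 < z.2) (h1 : z.2 < 1) :
    isInterior (phi1 z) ∧ (phi1 z).1 + (phi1 z).2 = 1 := by
  have hp : (0:ℚ) < 1 + z.2 := by linarith
  simp only [phi1, isInterior, h]
  refine ⟨⟨by positivity, ?_, ?_⟩, ?_⟩
  · rw [div_lt_div_iff₀ hp hp]; nlinarith
  · rw [div_lt_one hp]; linarith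
  · rw [← add_div, div_eq_one_iff_eq (by linarith)]

lemma phi0_injOn {S : Set (ℚ × ℚ)} (h : ∀ z ∈ S, 0 ≤ z.2) : S.InjOn phi0 := by
  intro a ha b hb hab
  have ha' : (0:ℚ) < 1 + a.2 := by have := h a ha; linarith
  have hb' : (0:ℚ) < 1 + b.2 := by have := h b hb; linarith
  simp only [phi0, Prod.ext_iff] at hab
  obtain ⟨e1, e2⟩ := hab
  rw [div_eq_div_iff ha'.ne' hb'.ne'] at e1
  have h2 : a.2 = b.2 := by nlinarith
  rw [h2] at e2
  have h1 : a.1 = b.1 := by field_simp at e2; exact e2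
  exact Prod.ext h1 h2

lemma phi1_injOn {S : Set (ℚ × ℚ)} (h : ∀ z ∈ S, 0 ≤ z.2) : S.InjOn phi1 := by
  intro a ha b hb hab
  have ha' : (0:ℚ) < 1 + a.2 := by have := h a ha; linarith
  have hb' : (0:ℚ) < 1 + b.2 := by have := h b hb; linarith
  simp only [phi1, Prod.ext_iff] at hab
  obtain ⟨e1, e2⟩ := hab
  rw [div_eq_div_iff ha'.ne' hb'.ne'] at e2
  have h2 : a.2 = b.2 := by nlinarith
  rw [h2] at e1
  have h1 : a.1 = b.1 := by field_simp at e1; exact e1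
  exact Prod.ext h1 h2

def inTri (z : ℚ × ℚ) : Prop :=
  (z.2 = 0 ∧ 0 < z.1 ∧ z.1 < 1) ∨ (z.1 = 1 ∧ 0 < z.2 ∧ z.2 < 1) ∨
  (z.1 = z.2 ∧ 0 < z.1 ∧ z.1 < 1) ∨ isInterior z

structure TInv (n : ℕ) : Prop where
  fin : (treeLevel n).Finite
  tri : ∀ z ∈ treeLevel n, inTri z
  c0 : (treeLevel n ∩ {z | z.2 = 0}).ncard = 2^n
  c1 : (treeLevel n ∩ {z | z.1 = 1}).ncard = 2^n
  cd : (treeLevel n ∩ {z | z.1 = z.2}).ncard = 2^n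
  ci : (treeLevel n ∩ {z | isInterior z}).ncard = n * 2^(n-1)

lemma TInv_zero : TInv 0 := by
  have hfin : (treeLevel 0).Finite := by
    simp only [treeLevel]
    exact (Set.finite_singleton _).insert _ |>.insert _
  refine ⟨hfin, ?_, ?_, ?_, ?_, ?_⟩
  · intro z hz
    simp only [treeLevel, Set.mem_insert_iff, Set.mem_singleton_iff] at hz
    rcases hz with rfl|rfl|rfl <;> simp [inTri, isInterior] <;> norm_num
  · have : treeLevel 0 ∩ {z | z.2 = 0} = {((1:ℚ)/2, (0:ℚ))} := by
      ext z
      simp only [treeLevel, Set.mem_inter_iff, Set.mem_insert_iff, Set.mem_singleton_iff,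
        Set.mem_setOf_eq, Prod.ext_iff]
      constructor
      · rintro ⟨⟨a,b⟩|⟨a,b⟩|⟨a,b⟩, h⟩
        · exact ⟨a, b⟩
        · rw [b] at h; norm_num at h
        · rw [b] at h; norm_num at h
      · rintro ⟨h1, h2⟩; exact ⟨Or.inl ⟨h1, h2⟩, h2⟩
    rw [this, Set.ncard_singleton]; norm_num
  · have : treeLevel 0 ∩ {z | z.1 = 1} = {((1:ℚ), (1:ℚ)/2)} := by
      ext z
      simp only [treeLevel, Set.mem_inter_iff, Set.mem_insert_iff, Set.mem_singleton_iff,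
        Set.mem_setOf_eq, Prod.ext_iff]
      constructor
      · rintro ⟨⟨a,b⟩|⟨a,b⟩|⟨a,b⟩, h⟩
        · rw [a] at h; norm_num at h
        · exact ⟨a, b⟩
        · rw [a] at h; norm_num at h
      · rintro ⟨h1, h2⟩; exact ⟨Or.inr (Or.inl ⟨h1, h2⟩), h1⟩
    rw [this, Set.ncard_singleton]; norm_num
  · have : treeLevel 0 ∩ {z | z.1 = z.2} = {((1:ℚ)/2, (1:ℚ)/2)} := by
      ext z
      simp only [treeLevel, Set.mem_inter_iff, Set.mem_insert_iff, Set.mem_singleton_iff,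
        Set.mem_setOf_eq, Prod.ext_iff]
      constructor
      · rintro ⟨⟨a,b⟩|⟨a,b⟩|⟨a,b⟩, h⟩
        · rw [a, b] at h; norm_num at h
        · rw [a, b] at h; norm_num at h
        · exact ⟨a, b⟩
      · rintro ⟨h1, h2⟩; exact ⟨Or.inr (Or.inr ⟨h1, h2⟩), by rw [h1, h2]⟩
    rw [this, Set.ncard_singleton]; norm_num
  · have : treeLevel 0 ∩ {z | isInterior z} = ∅ := by
      ext z
      simp only [treeLevel, Set.mem_inter_iff, Set.mem_insert_iff, Set.mem_singleton_iff,
        Set.mem_setOf_eq, Set.mem_empty_iff_false, iff_false, not_and]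
      rintro (rfl|rfl|rfl) ⟨a,b,c⟩ <;> simp_all
    rw [this]; simp

lemma TInv_step {n : ℕ} (h : TInv n) : TInv (n+1) := by
  obtain ⟨fin, tri, hc0, hc1, hcd, hci⟩ := h
  set T := treeLevel n with hTdef
  set Ai := T ∩ {z : ℚ × ℚ | isInterior z} with hAi
  set Ad := T ∩ {z : ℚ × ℚ | z.1 = z.2} with hAd
  set Ar := T ∩ {z : ℚ × ℚ | z.1 = 1} with hAr
  have finAi : Ai.Finite := fin.subset Set.inter_subset_left
  have finAd : Ad.Finite := fin.subset Set.inter_subset_left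
  have finAr : Ar.Finite := fin.subset Set.inter_subset_left
  have memAd : ∀ z ∈ Ad, z.1 = z.2 ∧ 0 < z.1 ∧ z.1 < 1 := by
    rintro z ⟨hz, (hd : z.1 = z.2)⟩
    refine ⟨hd, ?_, ?_⟩ <;>
      rcases tri z hz with ⟨a,b,c⟩|⟨a,b,c⟩|⟨a,b,c⟩|⟨a,b,c⟩ <;> linarith
  have memAr : ∀ z ∈ Ar, z.1 = 1 ∧ 0 < z.2 ∧ z.2 < 1 := by
    rintro z ⟨hz, (hr : z.1 = 1)⟩
    refine ⟨hr, ?_, ?_⟩ <;>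
      rcases tri z hz with ⟨a,b,c⟩|⟨a,b,c⟩|⟨a,b,c⟩|⟨a,b,c⟩ <;> linarith
  have memAi : ∀ z ∈ Ai, isInterior z := fun z hz => hz.2
  set D := phi1 '' Ad ∪ phi0 '' Ar with hD
  set I := phi0 '' Ai ∪ phi1 '' Ai ∪ phi1 '' Ar with hI
  set E0 := (fun z : ℚ × ℚ => (z.1, (0 : ℚ))) '' D with hE0
  set E1 := (fun z : ℚ × ℚ => ((1 : ℚ), z.1)) '' E0 with hE1
  have memD : ∀ w ∈ D, w.1 = w.2 ∧ 0 < w.1 ∧ w.1 < 1 := by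
    rintro w (⟨z, hz, rfl⟩|⟨z, hz, rfl⟩)
    · obtain ⟨a, b, c⟩ := memAd z hz
      obtain ⟨d, e, f⟩ := phi1_diag a b c
      exact ⟨d, e, by linarith⟩
    · obtain ⟨a, b, c⟩ := memAr z hz
      obtain ⟨d, e, f⟩ := phi0_right a b c
      exact ⟨d, by linarith, f⟩
  have memI : ∀ w ∈ I, isInterior w := by
    rintro w ((⟨z, hz, rfl⟩|⟨z, hz, rfl⟩)|⟨z, hz, rfl⟩)
    · exact (phi0_int (memAi z hz)).1
    · exact (phi1_int (memAi z hz)).1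
    · obtain ⟨a, b, c⟩ := memAr z hz
      exact (phi1_right a b c).1
  have memE0 : ∀ w ∈ E0, w.2 = 0 ∧ 0 < w.1 ∧ w.1 < 1 := by
    rintro w ⟨z, hz, rfl⟩
    obtain ⟨a, b, c⟩ := memD z hz
    exact ⟨rfl, b, c⟩
  have memE1 : ∀ w ∈ E1, w.1 = 1 ∧ 0 < w.2 ∧ w.2 < 1 := by
    rintro w ⟨z, hz, rfl⟩
    obtain ⟨a, b, c⟩ := memE0 z hz
    exact ⟨rfl, b, c⟩
  -- cardinalities
  have nonnegAd : ∀ z ∈ Ad, 0 ≤ z.2 := fun z hz => by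
    obtain ⟨a, b, c⟩ := memAd z hz; linarith
  have nonnegAr : ∀ z ∈ Ar, 0 ≤ z.2 := fun z hz => (memAr z hz).2.1.le
  have nonnegAi : ∀ z ∈ Ai, 0 ≤ z.2 := fun z hz => (memAi z hz).1.le
  have cardD : D.ncard = 2 ^ (n + 1) := by
    rw [hD, Set.ncard_union_eq ?_ (finAd.image _) (finAr.image _),
      Set.ncard_image_of_injOn (phi1_injOn nonnegAd),
      Set.ncard_image_of_injOn (phi0_injOn nonnegAr), hcd, hc1]
    · ring
    · rw [Set.disjoint_left]
      rintro w ⟨z, hz, rfl⟩ ⟨y, hy, hw⟩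
      obtain ⟨a1, b1, c1⟩ := memAd z hz
      obtain ⟨a2, b2, c2⟩ := memAr y hy
      have h1 := (phi1_diag a1 b1 c1).2.2
      have h2 := (phi0_right a2 b2 c2).2.1
      rw [hw] at h2
      linarith
  have cardE0 : E0.ncard = 2 ^ (n + 1) := by
    rw [hE0, Set.ncard_image_of_injOn, cardD]
    intro a ha b hb hab
    simp only [Prod.mk.injEq] at hab
    have ha' := (memD a ha).1
    have hb' := (memD b hb).1
    exact Prod.ext hab.1 (by rw [← ha', ← hb']; exact hab.1)
  have finD : D.Finite := (finAd.image _).union (finAr.image _)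
  have finE0 : E0.Finite := finD.image _
  have finE1 : E1.Finite := finE0.image _
  have finI : I.Finite := ((finAi.image _).union (finAi.image _)).union (finAr.image _)
  have cardE1 : E1.ncard = 2 ^ (n + 1) := by
    rw [hE1, Set.ncard_image_of_injOn, cardE0]
    intro a ha b hb hab
    simp only [Prod.mk.injEq] at hab
    have ha' := (memE0 a ha).1
    have hb' := (memE0 b hb).1
    exact Prod.ext hab.2 (by rw [ha', hb'])
  have sum0 : ∀ w ∈ phi0 '' Ai, 1 < w.1 + w.2 := by
    rintro w ⟨z, hz, rfl⟩; exact (phi0_int (memAi z hz)).2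
  have sum1 : ∀ w ∈ phi1 '' Ai, w.1 + w.2 < 1 := by
    rintro w ⟨z, hz, rfl⟩; exact (phi1_int (memAi z hz)).2
  have sumr : ∀ w ∈ phi1 '' Ar, w.1 + w.2 = 1 := by
    rintro w ⟨z, hz, rfl⟩
    obtain ⟨a, b, c⟩ := memAr z hz
    exact (phi1_right a b c).2
  have cardI : I.ncard = (n + 1) * 2 ^ n := by
    have d1 : Disjoint (phi0 '' Ai) (phi1 '' Ai) := by
      rw [Set.disjoint_left]
      intro w hw1 hw2
      have := sum0 w hw1
      have := sum1 w hw2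
      linarith
    have d2 : Disjoint (phi0 '' Ai ∪ phi1 '' Ai) (phi1 '' Ar) := by
      rw [Set.disjoint_left]
      rintro w (hw1|hw1) hw2 <;> [have := sum0 w hw1; have := sum1 w hw1] <;>
        have := sumr w hw2 <;> linarith
    rw [hI, Set.ncard_union_eq d2 ((finAi.image _).union (finAi.image _)) (finAr.image _),
      Set.ncard_union_eq d1 (finAi.image _) (finAi.image _),
      Set.ncard_image_of_injOn (phi0_injOn nonnegAi),
      Set.ncard_image_of_injOn (phi1_injOn nonnegAi),
      Set.ncard_image_of_injOn (phi1_injOn nonnegAr), hci, hc1]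
    cases n with
    | zero => norm_num
    | succ m => simp only [Nat.add_sub_cancel, pow_succ]; ring
  -- structure of the next level
  have hQ : levelUp T = D ∪ I := by
    have e1 : {z ∈ T | isInterior z} = Ai := rfl
    have e2 : {z ∈ T | z.1 = z.2} = Ad := rfl
    have e3 : {z ∈ T | z.1 = 1} = Ar := rfl
    rw [levelUp, e1, e2, e3, hD, hI]
    ext w
    simp only [Set.mem_union]
    tauto
  have hQdiag : {z ∈ levelUp T | z.1 = z.2} = D := by
    ext w
    simp only [Set.mem_setOf_eq, Set.mem_sep_iff]
    constructor
    · rintro ⟨hw, hdg⟩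
      rw [hQ] at hw
      rcases hw with hw|hw
      · exact hw
      · exfalso
        obtain ⟨a, b, c⟩ := memI w hw
        linarith
    · intro hw
      exact ⟨by rw [hQ]; exact Or.inl hw, (memD w hw).1⟩
  have hQ0 : {z ∈ levelUp T | z.2 = 0} = ∅ := by
    ext w
    simp only [Set.mem_setOf_eq, Set.mem_sep_iff, Set.mem_empty_iff_false, iff_false, not_and]
    intro hw h0
    rw [hQ] at hw
    rcases hw with hw|hw
    · obtain ⟨a, b, c⟩ := memD w hw; exact absurd h0 (by rw [← a]; intro e; linarith)
    · obtain ⟨a, b, c⟩ := memI w hw; linarith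
  have hT1 : treeLevel (n + 1) = D ∪ I ∪ E0 ∪ E1 := by
    have : treeLevel (n + 1) = sameLevelClosure (levelUp T) := rfl
    rw [this, sameLevelClosure, hQdiag, hQ0, Set.image_empty, Set.union_empty, hQ,
      ← hE0, ← hE1]
  have i0 : treeLevel (n + 1) ∩ {z | z.2 = 0} = E0 := by
    rw [hT1]
    ext w
    simp only [Set.mem_inter_iff, Set.mem_union, Set.mem_setOf_eq]
    constructor
    · rintro ⟨((hw|hw)|hw)|hw, h0⟩
      · exfalso; obtain ⟨a, b, c⟩ := memD w hw; linarith
      · exfalso; obtain ⟨a, b, c⟩ := memI w hw; linarith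
      · exact hw
      · exfalso; obtain ⟨a, b, c⟩ := memE1 w hw; linarith
    · intro hw
      exact ⟨Or.inl (Or.inr hw), (memE0 w hw).1⟩
  have i1 : treeLevel (n + 1) ∩ {z | z.1 = 1} = E1 := by
    rw [hT1]
    ext w
    simp only [Set.mem_inter_iff, Set.mem_union, Set.mem_setOf_eq]
    constructor
    · rintro ⟨((hw|hw)|hw)|hw, h0⟩
      · exfalso; obtain ⟨a, b, c⟩ := memD w hw; linarith
      · exfalso; obtain ⟨a, b, c⟩ := memI w hw; linarith
      · exfalso; obtain ⟨a, b, c⟩ := memE0 w hw; linarith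
      · exact hw
    · intro hw
      exact ⟨Or.inr hw, (memE1 w hw).1⟩
  have idg : treeLevel (n + 1) ∩ {z | z.1 = z.2} = D := by
    rw [hT1]
    ext w
    simp only [Set.mem_inter_iff, Set.mem_union, Set.mem_setOf_eq]
    constructor
    · rintro ⟨((hw|hw)|hw)|hw, h0⟩
      · exact hw
      · exfalso; obtain ⟨a, b, c⟩ := memI w hw; linarith
      · exfalso; obtain ⟨a, b, c⟩ := memE0 w hw; linarith
      · exfalso; obtain ⟨a, b, c⟩ := memE1 w hw; linarith
    · intro hw
      exact ⟨Or.inl (Or.inl (Or.inl hw)), (memD w hw).1⟩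
  have ii : treeLevel (n + 1) ∩ {z | isInterior z} = I := by
    rw [hT1]
    ext w
    simp only [Set.mem_inter_iff, Set.mem_union, Set.mem_setOf_eq]
    constructor
    · rintro ⟨((hw|hw)|hw)|hw, h0⟩
      · exfalso; obtain ⟨a, b, c⟩ := memD w hw; obtain ⟨d, e, f⟩ := h0; linarith
      · exact hw
      · exfalso; obtain ⟨a, b, c⟩ := memE0 w hw; obtain ⟨d, e, f⟩ := h0; linarith
      · exfalso; obtain ⟨a, b, c⟩ := memE1 w hw; obtain ⟨d, e, f⟩ := h0; linarith
    · intro hw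
      exact ⟨Or.inl (Or.inl (Or.inr hw)), memI w hw⟩
  refine ⟨?_, ?_, ?_, ?_, ?_, ?_⟩
  · rw [hT1]
    exact ((finD.union finI).union finE0).union finE1
  · intro z hz
    rw [hT1] at hz
    rcases hz with ((hz|hz)|hz)|hz
    · obtain ⟨a, b, c⟩ := memD z hz
      exact Or.inr (Or.inr (Or.inl ⟨a, b, c⟩))
    · exact Or.inr (Or.inr (Or.inr (memI z hz)))
    · obtain ⟨a, b, c⟩ := memE0 z hz
      exact Or.inl ⟨a, b, c⟩
    · obtain ⟨a, b, c⟩ := memE1 z hz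
      exact Or.inr (Or.inl ⟨a, b, c⟩)
  · rw [i0]; exact cardE0
  · rw [i1]; exact cardE1
  · rw [idg]; exact cardD
  · rw [ii, cardI]; simp

lemma TInv_all (n : ℕ) : TInv n := by
  induction n with
  | zero => exact TInv_zero
  | succ m ih => exact TInv_step ih

/-- Counting the points of level `n` of the tree: the boundary points number `3·2ⁿ`
(equally distributed, `2ⁿ` on each side), the interior points number `n·2^{n-1}`,
and hence `#𝓣ₙ = 3·2ⁿ + n·2^{n-1}`. -/
theorem treeLevel_card (n : ℕ) :
    (treeLevel n ∩ {z | z.2 = 0}).ncard = 2 ^ n ∧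
    (treeLevel n ∩ {z | z.1 = 1}).ncard = 2 ^ n ∧
    (treeLevel n ∩ {z | z.1 = z.2}).ncard = 2 ^ n ∧
    (treeLevel n ∩ {z | z.2 = 0 ∨ z.1 = 1 ∨ z.1 = z.2}).ncard = 3 * 2 ^ n ∧
    (treeLevel n ∩ {z | isInterior z}).ncard = n * 2 ^ (n - 1) ∧
    (treeLevel n).ncard = 3 * 2 ^ n + n * 2 ^ (n - 1) := by
  obtain ⟨fin, tri, c0, c1, cd, ci⟩ := TInv_all n
  set T := treeLevel n with hT
  have f0 : (T ∩ {z | z.2 = 0}).Finite := fin.subset Set.inter_subset_left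
  have f1 : (T ∩ {z | z.1 = 1}).Finite := fin.subset Set.inter_subset_left
  have fd : (T ∩ {z | z.1 = z.2}).Finite := fin.subset Set.inter_subset_left
  have fi : (T ∩ {z | isInterior z}).Finite := fin.subset Set.inter_subset_left
  have d01 : Disjoint (T ∩ {z | z.2 = 0}) (T ∩ {z | z.1 = 1}) := by
    rw [Set.disjoint_left]
    rintro z ⟨hz, (h2 : z.2 = 0)⟩ ⟨-, (h1 : z.1 = 1)⟩
    rcases tri z hz with ⟨a,b,c⟩|⟨a,b,c⟩|⟨a,b,c⟩|⟨a,b,c⟩ <;> linarith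
  have d0d : Disjoint (T ∩ {z | z.2 = 0}) (T ∩ {z | z.1 = z.2}) := by
    rw [Set.disjoint_left]
    rintro z ⟨hz, (h2 : z.2 = 0)⟩ ⟨-, (h1 : z.1 = z.2)⟩
    rcases tri z hz with ⟨a,b,c⟩|⟨a,b,c⟩|⟨a,b,c⟩|⟨a,b,c⟩ <;> linarith
  have d1d : Disjoint (T ∩ {z | z.1 = 1}) (T ∩ {z | z.1 = z.2}) := by
    rw [Set.disjoint_left]
    rintro z ⟨hz, (h2 : z.1 = 1)⟩ ⟨-, (h1 : z.1 = z.2)⟩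
    rcases tri z hz with ⟨a,b,c⟩|⟨a,b,c⟩|⟨a,b,c⟩|⟨a,b,c⟩ <;> linarith
  have hBsplit : T ∩ {z | z.2 = 0 ∨ z.1 = 1 ∨ z.1 = z.2} =
      (T ∩ {z | z.2 = 0}) ∪ (T ∩ {z | z.1 = 1}) ∪ (T ∩ {z | z.1 = z.2}) := by
    ext z
    simp only [Set.mem_inter_iff, Set.mem_union, Set.mem_setOf_eq]
    tauto
  have cB : (T ∩ {z | z.2 = 0 ∨ z.1 = 1 ∨ z.1 = z.2}).ncard = 3 * 2 ^ n := by
    rw [hBsplit, Set.ncard_union_eq (by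
        rw [Set.disjoint_union_left]; exact ⟨d0d, d1d⟩) (f0.union f1) fd,
      Set.ncard_union_eq d01 f0 f1, c0, c1, cd]
    ring
  refine ⟨c0, c1, cd, cB, ci, ?_⟩
  have hTsplit : T = (T ∩ {z | z.2 = 0 ∨ z.1 = 1 ∨ z.1 = z.2}) ∪ (T ∩ {z | isInterior z}) := by
    ext z
    simp only [Set.mem_inter_iff, Set.mem_union, Set.mem_setOf_eq]
    constructor
    · intro hz
      rcases tri z hz with ⟨a,b,c⟩|⟨a,b,c⟩|⟨a,b,c⟩|hint
      · exact Or.inl ⟨hz, Or.inl a⟩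
      · exact Or.inl ⟨hz, Or.inr (Or.inl a)⟩
      · exact Or.inl ⟨hz, Or.inr (Or.inr a)⟩
      · exact Or.inr ⟨hz, hint⟩
    · rintro (⟨hz, -⟩|⟨hz, -⟩) <;> exact hz
  have dBI : Disjoint (T ∩ {z | z.2 = 0 ∨ z.1 = 1 ∨ z.1 = z.2}) (T ∩ {z | isInterior z}) := by
    rw [Set.disjoint_left]
    rintro z ⟨-, hb⟩ ⟨-, hi⟩
    obtain ⟨a, b, c⟩ := hi
    rcases hb with h|h|h <;> linarith
  calc T.ncard = ((T ∩ {z | z.2 = 0 ∨ z.1 = 1 ∨ z.1 = z.2}) ∪ (T ∩ {z | isInterior z})).ncard := by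
        rw [← hTsplit]
    _ = 3 * 2 ^ n + n * 2 ^ (n - 1) := by
        rw [Set.ncard_union_eq dBI (fin.subset Set.inter_subset_left) fi, cB, ci]
end

section
/- For all n ≥ 0, the boundary points of level n of the triangular tree are exactly 𝓑ₙ = {(p/q, p/q), (p/q, 0), (1, p/q) : p/q ∈ F^{−n}(1/2)}, where F is the Farey map on [0,1]. -/
/-- The Farey map (restricted to rationals). -/
def farey (x : ℚ) : ℚ := if x ≤ 1/2 then x / (1 - x) else (1 - x) / x

def Pset (n : ℕ) : Set ℚ := {x | 0 ≤ x ∧ x ≤ 1 ∧ farey^[n] x = 1/2}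

lemma farey_mem {x : ℚ} (h0 : 0 ≤ x) (h1 : x ≤ 1) : 0 ≤ farey x ∧ farey x ≤ 1 := by
  unfold farey
  split_ifs with h
  · refine ⟨div_nonneg h0 (by linarith), ?_⟩
    rw [div_le_one (by linarith)]; linarith
  · push_neg at h
    refine ⟨div_nonneg (by linarith) (by linarith), ?_⟩
    rw [div_le_one (by linarith)]; linarith

lemma Pset_strict : ∀ n, ∀ x ∈ Pset n, 0 < x ∧ x < 1 := by
  intro n
  induction n with
  | zero =>
    rintro x ⟨_, _, h⟩
    simp only [Function.iterate_zero_apply] at h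
    subst h; norm_num
  | succ n ih =>
    rintro x ⟨h0, h1, h⟩
    rw [Function.iterate_succ_apply] at h
    obtain ⟨f0, f1⟩ := farey_mem h0 h1
    obtain ⟨hp, _⟩ := ih (farey x) ⟨f0, f1, h⟩
    constructor
    · rcases eq_or_lt_of_le h0 with h' | h'
      · exfalso; rw [← h'] at hp; norm_num [farey] at hp
      · exact h'
    · rcases eq_or_lt_of_le h1 with h' | h'
      · exfalso; rw [h'] at hp; norm_num [farey] at hp
      · exact h'

lemma farey_step_a {t : ℚ} (ht0 : 0 < t) (ht1 : t < 1) : farey (t / (1 + t)) = t := by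
  have h1t : (0:ℚ) < 1 + t := by linarith
  have hle : t / (1 + t) ≤ 1/2 := by
    rw [div_le_div_iff₀ h1t (by norm_num)]; linarith
  rw [farey, if_pos hle]
  have h2 : 1 - t / (1 + t) = 1 / (1 + t) := by field_simp; ring
  rw [h2]
  field_simp

lemma farey_step_b {t : ℚ} (ht0 : 0 < t) (ht1 : t < 1) : farey (1 / (1 + t)) = t := by
  have h1t : (0:ℚ) < 1 + t := by linarith
  have hgt : ¬ (1 / (1 + t) ≤ 1/2) := by
    rw [not_le, div_lt_div_iff₀ (by norm_num) h1t]; linarith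
  rw [farey, if_neg hgt]
  have h2 : 1 - 1 / (1 + t) = t / (1 + t) := by field_simp; ring
  rw [h2]
  field_simp

lemma farey_eq_iff {x t : ℚ} (hx0 : 0 ≤ x) (hx1 : x ≤ 1) (ht0 : 0 < t) (ht1 : t < 1) :
    farey x = t ↔ x = t / (1 + t) ∨ x = 1 / (1 + t) := by
  have h1t : (0:ℚ) < 1 + t := by linarith
  constructor
  · intro h
    rw [farey] at h
    split_ifs at h with hle
    · left
      have hx2 : (0:ℚ) < 1 - x := by linarith
      rw [div_eq_iff (ne_of_gt hx2)] at h
      rw [eq_div_iff (ne_of_gt h1t)]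
      linear_combination h
    · right
      push_neg at hle
      have hx2 : (0:ℚ) < x := by linarith
      rw [div_eq_iff (ne_of_gt hx2)] at h
      rw [eq_div_iff (ne_of_gt h1t)]
      linear_combination -h
  · rintro (rfl | rfl)
    · exact farey_step_a ht0 ht1
    · exact farey_step_b ht0 ht1

lemma Pset_succ_iff {n : ℕ} {x : ℚ} :
    x ∈ Pset (n + 1) ↔ ∃ t ∈ Pset n, x = t / (1 + t) ∨ x = 1 / (1 + t) := by
  constructor
  · rintro ⟨h0, h1, h⟩
    rw [Function.iterate_succ_apply] at h
    obtain ⟨f0, f1⟩ := farey_mem h0 h1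
    have htP : farey x ∈ Pset n := ⟨f0, f1, h⟩
    obtain ⟨ht0, ht1⟩ := Pset_strict n _ htP
    exact ⟨farey x, htP, (farey_eq_iff h0 h1 ht0 ht1).mp rfl⟩
  · rintro ⟨t, htP, hx⟩
    obtain ⟨ht0, ht1⟩ := Pset_strict n t htP
    have h1t : (0:ℚ) < 1 + t := by linarith
    obtain ⟨_, _, hit⟩ := htP
    have hf : farey x = t := by
      rcases hx with rfl | rfl
      · exact farey_step_a ht0 ht1
      · exact farey_step_b ht0 ht1
    have hb0 : 0 ≤ x := by
      rcases hx with rfl | rfl <;> positivity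
    have hb1 : x ≤ 1 := by
      rcases hx with rfl | rfl <;> (rw [div_le_one h1t]; linarith)
    exact ⟨hb0, hb1, by rw [Function.iterate_succ_apply, hf, hit]⟩

lemma phi0_interior {z : ℚ × ℚ} (h : isInterior z) : isInterior (phi0 z) := by
  obtain ⟨h1, h2, h3⟩ := h
  have hc : (0:ℚ) < 1 + z.2 := by linarith
  simp only [phi0, isInterior]
  refine ⟨div_pos (by linarith) hc, ?_, ?_⟩
  · rw [div_lt_div_iff₀ hc hc]; nlinarith
  · rw [div_lt_one hc]; linarith

lemma phi1_interior {z : ℚ × ℚ} (h : isInterior z) : isInterior (phi1 z) := by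
  obtain ⟨h1, h2, h3⟩ := h
  have hc : (0:ℚ) < 1 + z.2 := by linarith
  simp only [phi1, isInterior]
  refine ⟨div_pos h1 hc, ?_, ?_⟩
  · rw [div_lt_div_iff₀ hc hc]; nlinarith
  · rw [div_lt_one hc]; linarith


lemma mem_levelUp_iff {P : Set (ℚ × ℚ)} {w : ℚ × ℚ} :
    w ∈ levelUp P ↔
      (∃ v, (v ∈ P ∧ isInterior v) ∧ phi0 v = w) ∨
      (∃ v, (v ∈ P ∧ isInterior v) ∧ phi1 v = w) ∨
      (∃ v, (v ∈ P ∧ v.1 = v.2) ∧ phi1 v = w) ∨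
      (∃ v, (v ∈ P ∧ v.1 = 1) ∧ phi0 v = w) ∨
      (∃ v, (v ∈ P ∧ v.1 = 1) ∧ phi1 v = w) := by
  simp only [levelUp, Set.mem_union, Set.mem_image, Set.mem_setOf_eq]
  constructor
  · rintro ((((h | h) | h) | h) | h)
    · exact Or.inl h
    · exact Or.inr (Or.inl h)
    · exact Or.inr (Or.inr (Or.inl h))
    · exact Or.inr (Or.inr (Or.inr (Or.inl h)))
    · exact Or.inr (Or.inr (Or.inr (Or.inr h)))
  · rintro (h | h | h | h | h)
    · exact Or.inl (Or.inl (Or.inl (Or.inl h)))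
    · exact Or.inl (Or.inl (Or.inl (Or.inr h)))
    · exact Or.inl (Or.inl (Or.inr h))
    · exact Or.inl (Or.inr h)
    · exact Or.inr h

lemma mem_slc_iff {Q : Set (ℚ × ℚ)} {w : ℚ × ℚ} :
    w ∈ sameLevelClosure Q ↔
      w ∈ Q ∨
      (∃ v, (v ∈ Q ∧ v.1 = v.2) ∧ (v.1, (0:ℚ)) = w) ∨
      (∃ v, (v ∈ Q ∧ v.2 = 0) ∧ ((1:ℚ), v.1) = w) ∨
      (∃ v, (v ∈ Q ∧ v.1 = v.2) ∧ ((1:ℚ), v.1) = w) := by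
  simp only [sameLevelClosure, Set.image_image, Set.mem_union, Set.mem_image,
    Set.mem_setOf_eq]
  constructor
  · rintro (((h | h) | h) | h)
    · exact Or.inl h
    · exact Or.inr (Or.inl h)
    · exact Or.inr (Or.inr (Or.inl h))
    · exact Or.inr (Or.inr (Or.inr h))
  · rintro (h | h | h | h)
    · exact Or.inl (Or.inl (Or.inl h))
    · exact Or.inl (Or.inl (Or.inr h))
    · exact Or.inl (Or.inr h)
    · exact Or.inr h

lemma levelUp_char (n : ℕ)
    (ih : ∀ z ∈ treeLevel n, isInterior z ∨ ∃ x ∈ Pset n, z = (x, x) ∨ z = (x, 0) ∨ z = (1, x)) :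
    ∀ w ∈ levelUp (treeLevel n), isInterior w ∨ ∃ x ∈ Pset (n + 1), w = (x, x) := by
  intro w hw
  rw [mem_levelUp_iff] at hw
  rcases hw with ⟨v, ⟨_, hvI⟩, rfl⟩ | ⟨v, ⟨_, hvI⟩, rfl⟩ | ⟨v, ⟨hvT, hvd⟩, rfl⟩ |
    ⟨v, ⟨hvT, hv1⟩, rfl⟩ | ⟨v, ⟨hvT, hv1⟩, rfl⟩
  · exact Or.inl (phi0_interior hvI)
  · exact Or.inl (phi1_interior hvI)
  · rcases ih v hvT with hI | ⟨x, hxP, hc⟩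
    · exact absurd hvd (ne_of_gt hI.2.1)
    · obtain ⟨hx0, hx1⟩ := Pset_strict n x hxP
      rcases hc with rfl | rfl | rfl
      · exact Or.inr ⟨x / (1 + x), Pset_succ_iff.mpr ⟨x, hxP, Or.inl rfl⟩, rfl⟩
      · simp only at hvd; exact absurd hvd (ne_of_gt hx0)
      · simp only at hvd; exact absurd hvd.symm (ne_of_lt hx1)
  · rcases ih v hvT with hI | ⟨x, hxP, hc⟩
    · exact absurd hv1 (ne_of_lt hI.2.2)
    · obtain ⟨hx0, hx1⟩ := Pset_strict n x hxP
      rcases hc with rfl | rfl | rfl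
      · simp only at hv1; exact absurd hv1 (ne_of_lt hx1)
      · simp only at hv1; exact absurd hv1 (ne_of_lt hx1)
      · exact Or.inr ⟨1 / (1 + x), Pset_succ_iff.mpr ⟨x, hxP, Or.inr rfl⟩, rfl⟩
  · rcases ih v hvT with hI | ⟨x, hxP, hc⟩
    · exact absurd hv1 (ne_of_lt hI.2.2)
    · obtain ⟨hx0, hx1⟩ := Pset_strict n x hxP
      rcases hc with rfl | rfl | rfl
      · simp only at hv1; exact absurd hv1 (ne_of_lt hx1)
      · simp only at hv1; exact absurd hv1 (ne_of_lt hx1)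
      · left
        have hc : (0:ℚ) < 1 + x := by linarith
        refine ⟨?_, ?_, ?_⟩
        · show 0 < x / (1 + x); positivity
        · show x / (1 + x) < 1 / (1 + x); rw [div_lt_div_iff₀ hc hc]; nlinarith
        · show 1 / (1 + x) < 1; rw [div_lt_one hc]; linarith

lemma treeLevel_char : ∀ n, ∀ z ∈ treeLevel n,
    isInterior z ∨ ∃ x ∈ Pset n, z = (x, x) ∨ z = (x, 0) ∨ z = (1, x) := by
  intro n
  induction n with
  | zero =>
    intro z hz
    right
    refine ⟨1/2, ⟨by norm_num, by norm_num, by simp⟩, ?_⟩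
    simp only [treeLevel, Set.mem_insert_iff, Set.mem_singleton_iff] at hz
    tauto
  | succ n ih =>
    intro z hz
    have ht : treeLevel (n + 1) = sameLevelClosure (levelUp (treeLevel n)) := rfl
    rw [ht, mem_slc_iff] at hz
    rcases hz with hz | ⟨v, ⟨hvQ, hvd⟩, rfl⟩ | ⟨v, ⟨hvQ, hv0⟩, rfl⟩ | ⟨v, ⟨hvQ, hvd⟩, rfl⟩
    · rcases levelUp_char n ih z hz with hI | ⟨x, hxP, rfl⟩
      · exact Or.inl hI
      · exact Or.inr ⟨x, hxP, Or.inl rfl⟩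
    · rcases levelUp_char n ih v hvQ with hI | ⟨x, hxP, rfl⟩
      · exact absurd hvd (ne_of_gt hI.2.1)
      · exact Or.inr ⟨x, hxP, Or.inr (Or.inl rfl)⟩
    · rcases levelUp_char n ih v hvQ with hI | ⟨x, hxP, rfl⟩
      · exact absurd hv0 (ne_of_gt hI.1)
      · simp only at hv0
        obtain ⟨hx0, _⟩ := Pset_strict (n + 1) x hxP
        exact absurd hv0 (ne_of_gt hx0)
    · rcases levelUp_char n ih v hvQ with hI | ⟨x, hxP, rfl⟩
      · exact absurd hvd (ne_of_gt hI.2.1)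
      · exact Or.inr ⟨x, hxP, Or.inr (Or.inr rfl)⟩

lemma treeLevel_mem : ∀ n, ∀ x ∈ Pset n,
    (x, x) ∈ treeLevel n ∧ (x, (0:ℚ)) ∈ treeLevel n ∧ ((1:ℚ), x) ∈ treeLevel n := by
  intro n
  induction n with
  | zero =>
    intro x hx
    have hx2 : x = 1/2 := by simpa using hx.2.2
    subst hx2
    refine ⟨?_, ?_, ?_⟩ <;> simp [treeLevel]
  | succ n ih =>
    intro x hx
    obtain ⟨t, htP, hcase⟩ := Pset_succ_iff.mp hx
    obtain ⟨hdiag, _, htop⟩ := ih t htP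
    have hxx : (x, x) ∈ levelUp (treeLevel n) := by
      rw [mem_levelUp_iff]
      rcases hcase with rfl | rfl
      · exact Or.inr (Or.inr (Or.inl ⟨(t, t), ⟨hdiag, rfl⟩, rfl⟩))
      · exact Or.inr (Or.inr (Or.inr (Or.inl ⟨((1:ℚ), t), ⟨htop, rfl⟩, rfl⟩)))
    have ht : treeLevel (n + 1) = sameLevelClosure (levelUp (treeLevel n)) := rfl
    refine ⟨?_, ?_, ?_⟩ <;> rw [ht, mem_slc_iff]
    · exact Or.inl hxx
    · exact Or.inr (Or.inl ⟨(x, x), ⟨hxx, rfl⟩, rfl⟩)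
    · exact Or.inr (Or.inr (Or.inr ⟨(x, x), ⟨hxx, rfl⟩, rfl⟩))

/-- The boundary points of level `n` of the triangular tree are exactly the points
`(p/q, p/q)`, `(p/q, 0)`, `(1, p/q)` with `p/q ∈ F⁻ⁿ(1/2)`, `F` the Farey map. -/
theorem treeLevel_boundary_eq_farey (n : ℕ) :
    {z | z ∈ treeLevel n ∧ (z.2 = 0 ∨ z.1 = 1 ∨ z.1 = z.2)} =
      {z : ℚ × ℚ | ∃ x : ℚ, 0 ≤ x ∧ x ≤ 1 ∧ farey^[n] x = 1/2 ∧
        (z = (x, x) ∨ z = (x, 0) ∨ z = (1, x))} := by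
  ext z
  simp only [Set.mem_setOf_eq]
  constructor
  · rintro ⟨hz, hbd⟩
    rcases treeLevel_char n z hz with ⟨h1, h2, h3⟩ | ⟨x, ⟨hx0, hx1, hxf⟩, hc⟩
    · exfalso
      rcases hbd with h | h | h
      · rw [h] at h1; exact lt_irrefl 0 h1
      · rw [h] at h3; exact lt_irrefl 1 h3
      · rw [h] at h2; exact lt_irrefl _ h2
    · exact ⟨x, hx0, hx1, hxf, hc⟩
  · rintro ⟨x, h0, h1, hf, hc⟩
    obtain ⟨ha, hb, hcc⟩ := treeLevel_mem n x ⟨h0, h1, hf⟩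
    rcases hc with rfl | rfl | rfl
    · exact ⟨ha, Or.inr (Or.inr rfl)⟩
    · exact ⟨hb, Or.inl rfl⟩
    · exact ⟨hcc, Or.inr (Or.inl rfl)⟩
end

section
/- Every pair of rational numbers (p/q, r/q) with 1 ≥ p/q ≥ r/q ≥ 0 appears exactly once in the triangular tree generated by the local inverses of the modified slow triangle map: ∪_{n ≥ −1} 𝓣ₙ = ℚ² ∩ △̄, with the union disjoint. -/
/-- Level `𝓣₋₁` of the tree: the vertices of the triangle. -/
def treeLevelNegOne : Set (ℚ × ℚ) := {(0, 0), (1, 0), (1, 1)}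

/-- Classification of non-vertex points of the closed triangle. -/
def good (z : ℚ × ℚ) : Prop :=
  isInterior z ∨ (0 < z.1 ∧ z.1 < 1 ∧ z.2 = z.1) ∨ (0 < z.1 ∧ z.1 < 1 ∧ z.2 = 0) ∨
    (z.1 = 1 ∧ 0 < z.2 ∧ z.2 < 1)

lemma mem_levelUp {P : Set (ℚ × ℚ)} {z : ℚ × ℚ} : z ∈ levelUp P ↔
    (∃ w, (w ∈ P ∧ isInterior w) ∧ phi0 w = z) ∨ (∃ w, (w ∈ P ∧ isInterior w) ∧ phi1 w = z) ∨
    (∃ w, (w ∈ P ∧ w.1 = w.2) ∧ phi1 w = z) ∨ (∃ w, (w ∈ P ∧ w.1 = 1) ∧ phi0 w = z) ∨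
    (∃ w, (w ∈ P ∧ w.1 = 1) ∧ phi1 w = z) := by
  simp only [levelUp, Set.mem_union, Set.mem_image, Set.mem_setOf_eq]
  constructor
  · rintro ((((h | h) | h) | h) | h)
    · exact Or.inl h
    · exact Or.inr (Or.inl h)
    · exact Or.inr (Or.inr (Or.inl h))
    · exact Or.inr (Or.inr (Or.inr (Or.inl h)))
    · exact Or.inr (Or.inr (Or.inr (Or.inr h)))
  · rintro (h | h | h | h | h)
    · exact Or.inl (Or.inl (Or.inl (Or.inl h)))
    · exact Or.inl (Or.inl (Or.inl (Or.inr h)))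
    · exact Or.inl (Or.inl (Or.inr h))
    · exact Or.inl (Or.inr h)
    · exact Or.inr h

lemma mem_slc {Q : Set (ℚ × ℚ)} {z : ℚ × ℚ} : z ∈ sameLevelClosure Q ↔
    z ∈ Q ∨ (∃ w, (w ∈ Q ∧ w.1 = w.2) ∧ (w.1, (0:ℚ)) = z) ∨
    (∃ w, (w ∈ Q ∧ w.2 = 0) ∧ ((1:ℚ), w.1) = z) ∨
    (∃ w, (w ∈ Q ∧ w.1 = w.2) ∧ ((1:ℚ), w.1) = z) := by
  simp only [sameLevelClosure, Set.mem_union, Set.mem_image, Set.mem_setOf_eq]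
  constructor
  · rintro (((h | ⟨w, hw, rfl⟩) | ⟨w, hw, rfl⟩) | ⟨v, ⟨w, hw, rfl⟩, rfl⟩)
    · exact Or.inl h
    · exact Or.inr (Or.inl ⟨w, hw, rfl⟩)
    · exact Or.inr (Or.inr (Or.inl ⟨w, hw, rfl⟩))
    · exact Or.inr (Or.inr (Or.inr ⟨w, hw, rfl⟩))
  · rintro (h | ⟨w, hw, rfl⟩ | ⟨w, hw, rfl⟩ | ⟨w, hw, rfl⟩)
    · exact Or.inl (Or.inl (Or.inl h))
    · exact Or.inl (Or.inl (Or.inr ⟨w, hw, rfl⟩))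
    · exact Or.inl (Or.inr ⟨w, hw, rfl⟩)
    · exact Or.inr ⟨(w.1, 0), ⟨w, hw, rfl⟩, rfl⟩

lemma good_diag {w : ℚ × ℚ} (hg : good w) (hd : w.1 = w.2) : 0 < w.1 ∧ w.1 < 1 := by
  rcases hg with ⟨h1, h2, h3⟩ | ⟨h1, h2, h3⟩ | ⟨h1, h2, h3⟩ | ⟨h1, h2, h3⟩ <;>
    exact ⟨by linarith, by linarith⟩

lemma good_right {w : ℚ × ℚ} (hg : good w) (hd : w.1 = 1) : 0 < w.2 ∧ w.2 < 1 := by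
  rcases hg with ⟨h1, h2, h3⟩ | ⟨h1, h2, h3⟩ | ⟨h1, h2, h3⟩ | ⟨h1, h2, h3⟩ <;>
    exact ⟨by linarith, by linarith⟩

lemma lup_cases_weak {P : Set (ℚ × ℚ)} (hg : ∀ w ∈ P, good w) {z : ℚ × ℚ}
    (hz : z ∈ levelUp P) :
    isInterior z ∨ (0 < z.1 ∧ z.1 < 1 ∧ z.2 = z.1) := by
  rcases mem_levelUp.1 hz with ⟨w, ⟨hwP, hw⟩, rfl⟩ | ⟨w, ⟨hwP, hw⟩, rfl⟩ |
    ⟨w, ⟨hwP, hw⟩, rfl⟩ | ⟨w, ⟨hwP, hw⟩, rfl⟩ | ⟨w, ⟨hwP, hw⟩, rfl⟩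
  · obtain ⟨h1, h2, h3⟩ := hw
    have hd : (0:ℚ) < 1 + w.2 := by linarith
    exact Or.inl ⟨div_pos (by linarith) hd, div_lt_div_of_pos_right (by linarith) hd,
      (div_lt_one hd).2 (by linarith)⟩
  · obtain ⟨h1, h2, h3⟩ := hw
    have hd : (0:ℚ) < 1 + w.2 := by linarith
    exact Or.inl ⟨div_pos h1 hd, div_lt_div_of_pos_right h2 hd,
      (div_lt_one hd).2 (by linarith)⟩
  · obtain ⟨h1, h2⟩ := good_diag (hg w hwP) hw
    have hd : (0:ℚ) < 1 + w.2 := by linarith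
    refine Or.inr ⟨div_pos (by linarith) hd, (div_lt_one hd).2 (by linarith), ?_⟩
    show w.2 / (1 + w.2) = w.1 / (1 + w.2)
    rw [hw]
  · obtain ⟨h1, h2⟩ := good_right (hg w hwP) hw
    have hd : (0:ℚ) < 1 + w.2 := by linarith
    refine Or.inr ⟨div_pos one_pos hd, (div_lt_one hd).2 (by linarith), ?_⟩
    show w.1 / (1 + w.2) = 1 / (1 + w.2)
    rw [hw]
  · obtain ⟨h1, h2⟩ := good_right (hg w hwP) hw
    have hd : (0:ℚ) < 1 + w.2 := by linarith
    refine Or.inl ⟨div_pos h1 hd, ?_, ?_⟩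
    · show w.2 / (1 + w.2) < w.1 / (1 + w.2)
      exact div_lt_div_of_pos_right (by linarith) hd
    · show w.1 / (1 + w.2) < 1
      exact (div_lt_one hd).2 (by linarith)

lemma lup_pos {P : Set (ℚ × ℚ)} (hg : ∀ w ∈ P, good w) {z : ℚ × ℚ}
    (hz : z ∈ levelUp P) : 0 < z.2 ∧ z.2 ≤ z.1 ∧ z.1 < 1 := by
  rcases lup_cases_weak hg hz with ⟨h1, h2, h3⟩ | ⟨h1, h2, h3⟩
  · exact ⟨h1, h2.le, h3⟩
  · exact ⟨by linarith [h3 ▸ h1], by rw [h3], h2⟩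

lemma lup_good {P : Set (ℚ × ℚ)} (hg : ∀ w ∈ P, good w) {z : ℚ × ℚ}
    (hz : z ∈ levelUp P) : good z := by
  rcases lup_cases_weak hg hz with h | ⟨h1, h2, h3⟩
  · exact Or.inl h
  · exact Or.inr (Or.inl ⟨h1, h2, h3⟩)

lemma mem_succ_iff {P : Set (ℚ × ℚ)} (hg : ∀ w ∈ P, good w) {z : ℚ × ℚ} :
    z ∈ sameLevelClosure (levelUp P) ↔
      z ∈ levelUp P ∨ (z.2 = 0 ∧ (z.1, z.1) ∈ levelUp P) ∨
        (z.1 = 1 ∧ (z.2, z.2) ∈ levelUp P) := by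
  constructor
  · intro h
    rcases mem_slc.1 h with h | ⟨w, ⟨hwQ, hw⟩, rfl⟩ | ⟨w, ⟨hwQ, hw⟩, rfl⟩ | ⟨w, ⟨hwQ, hw⟩, rfl⟩
    · exact Or.inl h
    · refine Or.inr (Or.inl ⟨rfl, ?_⟩)
      have : (w.1, w.1) = w := by ext <;> simp [hw.symm]
      rwa [this]
    · exact absurd (lup_pos hg hwQ).1 (by rw [hw]; exact lt_irrefl 0)
    · refine Or.inr (Or.inr ⟨rfl, ?_⟩)
      have : (w.1, w.1) = w := by ext <;> simp [hw.symm]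
      rwa [this]
  · rintro (h | ⟨h0, h⟩ | ⟨h1, h⟩)
    · exact mem_slc.2 (Or.inl h)
    · refine mem_slc.2 (Or.inr (Or.inl ⟨(z.1, z.1), ⟨h, rfl⟩, ?_⟩))
      ext <;> simp [h0.symm]
    · refine mem_slc.2 (Or.inr (Or.inr (Or.inr ⟨(z.2, z.2), ⟨h, rfl⟩, ?_⟩)))
      ext <;> simp [h1.symm]

lemma good_level : ∀ n : ℕ, ∀ w ∈ treeLevel n, good w := by
  intro n
  induction n with
  | zero =>
    intro w hw
    rcases hw with hw | hw | hw
    · exact hw ▸ Or.inr (Or.inr (Or.inl (by norm_num)))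
    · exact hw ▸ Or.inr (Or.inr (Or.inr (by norm_num)))
    · exact hw ▸ Or.inr (Or.inl (by norm_num))
  | succ n ih =>
    intro w hw
    rcases (mem_succ_iff ih).1 hw with h | ⟨h0, h⟩ | ⟨h1, h⟩
    · exact lup_good ih h
    · obtain ⟨ha, -, hb⟩ := lup_pos ih h
      exact Or.inr (Or.inr (Or.inl ⟨ha, hb, h0⟩))
    · obtain ⟨ha, -, hb⟩ := lup_pos ih h
      exact Or.inr (Or.inr (Or.inr ⟨h1, ha, hb⟩))

lemma mem_level_succ {n : ℕ} {z : ℚ × ℚ} :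
    z ∈ treeLevel (n+1) ↔
      z ∈ levelUp (treeLevel n) ∨ (z.2 = 0 ∧ (z.1, z.1) ∈ levelUp (treeLevel n)) ∨
        (z.1 = 1 ∧ (z.2, z.2) ∈ levelUp (treeLevel n)) :=
  mem_succ_iff (good_level n)

lemma mem_level_zero {z : ℚ × ℚ} :
    z ∈ treeLevel 0 ↔ z = (1/2, 0) ∨ z = (1, 1/2) ∨ z = (1/2, 1/2) := Iff.rfl

lemma bottom_iff_diag (n : ℕ) (t : ℚ) : (t, (0:ℚ)) ∈ treeLevel n ↔ (t, t) ∈ treeLevel n := by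
  cases n with
  | zero =>
    constructor <;> intro h <;> rcases mem_level_zero.1 h with h | h | h <;>
      rw [Prod.mk.injEq] at h
    · exact mem_level_zero.2 (by rw [h.1]; norm_num [Prod.mk.injEq])
    · exact absurd h.2 (by norm_num)
    · exact absurd h.2 (by norm_num)
    · exact absurd (h.1.symm.trans h.2) (by norm_num)
    · exact absurd (h.1.symm.trans h.2) (by norm_num)
    · exact mem_level_zero.2 (by rw [h.1]; norm_num [Prod.mk.injEq])
  | succ n =>
    rw [mem_level_succ, mem_level_succ]
    have hg := good_level n
    constructor
    · rintro (h | ⟨h0, h⟩ | ⟨h1, h⟩)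
      · exact absurd (lup_pos hg h).1 (lt_irrefl 0)
      · exact Or.inl h
      · exact absurd (lup_pos hg h).1 (lt_irrefl 0)
    · rintro (h | ⟨h0, h⟩ | ⟨h1, h⟩)
      · exact Or.inr (Or.inl ⟨rfl, h⟩)
      · exact Or.inr (Or.inl ⟨rfl, by simpa [h0] using h⟩)
      · exact Or.inr (Or.inl ⟨rfl, by simp only [h1] at h ⊢; exact h⟩)

lemma right_iff_diag (n : ℕ) (t : ℚ) : ((1:ℚ), t) ∈ treeLevel n ↔ (t, t) ∈ treeLevel n := by
  cases n with
  | zero =>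
    constructor <;> intro h <;> rcases mem_level_zero.1 h with h | h | h <;>
      rw [Prod.mk.injEq] at h
    · exact absurd h.1 (by norm_num)
    · exact mem_level_zero.2 (by rw [h.2]; norm_num [Prod.mk.injEq])
    · exact absurd h.1 (by norm_num)
    · exact absurd (h.1.symm.trans h.2) (by norm_num)
    · exact absurd (h.1.symm.trans h.2) (by norm_num)
    · exact mem_level_zero.2 (by rw [h.1]; norm_num [Prod.mk.injEq])
  | succ n =>
    rw [mem_level_succ, mem_level_succ]
    have hg := good_level n
    constructor
    · rintro (h | ⟨h0, h⟩ | ⟨h1, h⟩)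
      · exact absurd (lup_pos hg h).2.2 (lt_irrefl 1)
      · exact absurd (lup_pos hg h).2.2 (lt_irrefl 1)
      · exact Or.inl h
    · rintro (h | ⟨h0, h⟩ | ⟨h1, h⟩)
      · exact Or.inr (Or.inr ⟨rfl, h⟩)
      · exact Or.inr (Or.inr ⟨rfl, by simpa [h0] using h⟩)
      · exact Or.inr (Or.inr ⟨rfl, by simp only [h1] at h ⊢; exact h⟩)

section Parents

variable {n : ℕ}

lemma phi_comp0 {w z : ℚ × ℚ} (h : phi0 w = z) :
    1 / (1 + w.2) = z.1 ∧ w.1 / (1 + w.2) = z.2 :=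
  ⟨congrArg Prod.fst h, congrArg Prod.snd h⟩

lemma phi_comp1 {w z : ℚ × ℚ} (h : phi1 w = z) :
    w.1 / (1 + w.2) = z.1 ∧ w.2 / (1 + w.2) = z.2 :=
  ⟨congrArg Prod.fst h, congrArg Prod.snd h⟩

/-- R1 downwards : interior points above the antidiagonal come from `φ₀` of interior points. -/
lemma level_succ_int_gt {z : ℚ × ℚ} (hz : isInterior z) (hgt : 1 < z.1 + z.2) :
    z ∈ treeLevel (n+1) ↔ (z.2 / z.1, (1 - z.1) / z.1) ∈ treeLevel n := by
  obtain ⟨hy, hyx, hx1⟩ := hz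
  have hx0 : (0:ℚ) < z.1 := hy.trans hyx
  have hgd := good_level n
  rw [mem_level_succ]
  constructor
  · rintro (h | ⟨h0, -⟩ | ⟨h1, -⟩)
    · rcases mem_levelUp.1 h with ⟨w, ⟨hwP, hw⟩, h⟩ | ⟨w, ⟨hwP, hw⟩, h⟩ |
        ⟨w, ⟨hwP, hw⟩, h⟩ | ⟨w, ⟨hwP, hw⟩, h⟩ | ⟨w, ⟨hwP, hw⟩, h⟩
      · obtain ⟨h1, h2⟩ := phi_comp0 h
        obtain ⟨hw1, hw2, hw3⟩ := hw
        have hd : (0:ℚ) < 1 + w.2 := by linarith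
        have hde : (1:ℚ) + w.2 ≠ 0 := ne_of_gt hd
        have hweq : (z.2 / z.1, (1 - z.1) / z.1) = w := by
          rw [Prod.ext_iff, ← h1, ← h2]
          constructor <;> (field_simp <;> ring)
        rwa [hweq]
      · obtain ⟨h1, h2⟩ := phi_comp1 h
        obtain ⟨hw1, hw2, hw3⟩ := hw
        have hd : (0:ℚ) < 1 + w.2 := by linarith
        have : z.1 + z.2 < 1 := by
          rw [← h1, ← h2, ← add_div, div_lt_one hd]; linarith
        linarith
      · obtain ⟨h1, h2⟩ := phi_comp1 h
        have : z.1 = z.2 := by rw [← h1, ← h2, hw]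
        linarith
      · obtain ⟨h1, h2⟩ := phi_comp0 h
        have : z.1 = z.2 := by rw [← h1, ← h2, hw]
        linarith
      · obtain ⟨h1, h2⟩ := phi_comp1 h
        obtain ⟨hw2a, hw2b⟩ := good_right (hgd w hwP) hw
        have hd : (0:ℚ) < 1 + w.2 := by linarith
        have : z.1 + z.2 = 1 := by
          rw [← h1, ← h2, ← add_div, hw, div_self (ne_of_gt hd)]
        linarith
    · linarith [h0 ▸ hy]
    · linarith [h1 ▸ hx1]
  · intro hP
    have hne : z.1 ≠ 0 := ne_of_gt hx0
    have hint : isInterior (z.2 / z.1, (1 - z.1) / z.1) :=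
      ⟨div_pos (by linarith) hx0, div_lt_div_of_pos_right (by linarith) hx0,
        (div_lt_one hx0).2 hyx⟩
    have heq : phi0 (z.2 / z.1, (1 - z.1) / z.1) = z := by
      rw [phi0, Prod.ext_iff]
      constructor <;> (simp only []; field_simp <;> ring)
    exact Or.inl (mem_levelUp.2 (Or.inl ⟨_, ⟨hP, hint⟩, heq⟩))

/-- R1 downwards : interior points below the antidiagonal come from `φ₁` of interior points. -/
lemma level_succ_int_lt {z : ℚ × ℚ} (hz : isInterior z) (hlt : z.1 + z.2 < 1) :
    z ∈ treeLevel (n+1) ↔ (z.1 / (1 - z.2), z.2 / (1 - z.2)) ∈ treeLevel n := by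
  obtain ⟨hy, hyx, hx1⟩ := hz
  have hx0 : (0:ℚ) < z.1 := hy.trans hyx
  have hgd := good_level n
  rw [mem_level_succ]
  constructor
  · rintro (h | ⟨h0, -⟩ | ⟨h1, -⟩)
    · rcases mem_levelUp.1 h with ⟨w, ⟨hwP, hw⟩, h⟩ | ⟨w, ⟨hwP, hw⟩, h⟩ |
        ⟨w, ⟨hwP, hw⟩, h⟩ | ⟨w, ⟨hwP, hw⟩, h⟩ | ⟨w, ⟨hwP, hw⟩, h⟩
      · obtain ⟨h1, h2⟩ := phi_comp0 h
        obtain ⟨hw1, hw2, hw3⟩ := hw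
        have hd : (0:ℚ) < 1 + w.2 := by linarith
        have : 1 < z.1 + z.2 := by
          rw [← h1, ← h2, ← add_div, lt_div_iff₀ hd]; linarith
        linarith
      · obtain ⟨h1, h2⟩ := phi_comp1 h
        obtain ⟨hw1, hw2, hw3⟩ := hw
        have hd : (0:ℚ) < 1 + w.2 := by linarith
        have hde : (1:ℚ) + w.2 ≠ 0 := ne_of_gt hd
        have hz2 : (1:ℚ) - z.2 ≠ 0 := by
          intro hcon; rw [sub_eq_zero] at hcon; linarith
        have hweq : (z.1 / (1 - z.2), z.2 / (1 - z.2)) = w := by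
          rw [Prod.ext_iff, ← h1, ← h2]
          constructor <;> (field_simp; try ring)
        rwa [hweq]
      · obtain ⟨h1, h2⟩ := phi_comp1 h
        have : z.1 = z.2 := by rw [← h1, ← h2, hw]
        linarith
      · obtain ⟨h1, h2⟩ := phi_comp0 h
        have : z.1 = z.2 := by rw [← h1, ← h2, hw]
        linarith
      · obtain ⟨h1, h2⟩ := phi_comp1 h
        obtain ⟨hw2a, hw2b⟩ := good_right (hgd w hwP) hw
        have hd : (0:ℚ) < 1 + w.2 := by linarith
        have : z.1 + z.2 = 1 := by
          rw [← h1, ← h2, ← add_div, hw, div_self (ne_of_gt hd)]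
        linarith
    · linarith [h0 ▸ hy]
    · linarith [h1 ▸ hx1]
  · intro hP
    have hne : (1:ℚ) - z.2 ≠ 0 := by intro hcon; rw [sub_eq_zero] at hcon; linarith
    have hpos : (0:ℚ) < 1 - z.2 := by linarith
    have hint : isInterior (z.1 / (1 - z.2), z.2 / (1 - z.2)) :=
      ⟨div_pos hy hpos, div_lt_div_of_pos_right hyx hpos, (div_lt_one hpos).2 (by linarith)⟩
    have heq : phi1 (z.1 / (1 - z.2), z.2 / (1 - z.2)) = z := by
      rw [phi1, Prod.ext_iff]
      constructor <;> (simp only []; field_simp <;> ring)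
    exact Or.inl (mem_levelUp.2 (Or.inr (Or.inl ⟨_, ⟨hP, hint⟩, heq⟩)))

/-- R4 downwards : interior points on the antidiagonal come from `φ₁` of `x = 1` points. -/
lemma level_succ_int_eq {z : ℚ × ℚ} (hz : isInterior z) (heq1 : z.1 + z.2 = 1) :
    z ∈ treeLevel (n+1) ↔ (z.2 / z.1, z.2 / z.1) ∈ treeLevel n := by
  obtain ⟨hy, hyx, hx1⟩ := hz
  have hx0 : (0:ℚ) < z.1 := hy.trans hyx
  have hgd := good_level n
  rw [mem_level_succ, ← right_iff_diag n (z.2 / z.1)]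
  constructor
  · rintro (h | ⟨h0, -⟩ | ⟨h1, -⟩)
    · rcases mem_levelUp.1 h with ⟨w, ⟨hwP, hw⟩, h⟩ | ⟨w, ⟨hwP, hw⟩, h⟩ |
        ⟨w, ⟨hwP, hw⟩, h⟩ | ⟨w, ⟨hwP, hw⟩, h⟩ | ⟨w, ⟨hwP, hw⟩, h⟩
      · obtain ⟨h1, h2⟩ := phi_comp0 h
        obtain ⟨hw1, hw2, hw3⟩ := hw
        have hd : (0:ℚ) < 1 + w.2 := by linarith
        have : 1 < z.1 + z.2 := by
          rw [← h1, ← h2, ← add_div, lt_div_iff₀ hd]; linarith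
        linarith
      · obtain ⟨h1, h2⟩ := phi_comp1 h
        obtain ⟨hw1, hw2, hw3⟩ := hw
        have hd : (0:ℚ) < 1 + w.2 := by linarith
        have : z.1 + z.2 < 1 := by
          rw [← h1, ← h2, ← add_div, div_lt_one hd]; linarith
        linarith
      · obtain ⟨h1, h2⟩ := phi_comp1 h
        have : z.1 = z.2 := by rw [← h1, ← h2, hw]
        linarith
      · obtain ⟨h1, h2⟩ := phi_comp0 h
        have : z.1 = z.2 := by rw [← h1, ← h2, hw]
        linarith
      · obtain ⟨h1, h2⟩ := phi_comp1 h
        obtain ⟨hw2a, hw2b⟩ := good_right (hgd w hwP) hw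
        have hd : (0:ℚ) < 1 + w.2 := by linarith
        have hde : (1:ℚ) + w.2 ≠ 0 := ne_of_gt hd
        have hweq : ((1:ℚ), z.2 / z.1) = w := by
          rw [Prod.ext_iff]
          refine ⟨hw.symm, ?_⟩
          show z.2 / z.1 = w.2
          rw [← h1, ← h2, hw]
          field_simp
        rwa [hweq]
    · linarith [h0 ▸ hy]
    · linarith [h1 ▸ hx1]
  · intro hP
    have hne : z.1 ≠ 0 := ne_of_gt hx0
    have heqp : phi1 ((1:ℚ), z.2 / z.1) = z := by
      rw [phi1, Prod.ext_iff]
      constructor <;> (simp only []; field_simp <;> linarith)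
    exact Or.inl (mem_levelUp.2 (Or.inr (Or.inr (Or.inr (Or.inr ⟨_, ⟨hP, rfl⟩, heqp⟩)))))

end Parents

/-- R2 downwards : small diagonal points come from `φ₁` of diagonal points. -/
lemma level_succ_diag_lt {t : ℚ} (h0 : 0 < t) (h1 : t < 1/2) {n : ℕ} :
    (t, t) ∈ treeLevel (n+1) ↔ (t / (1 - t), t / (1 - t)) ∈ treeLevel n := by
  have hgd := good_level n
  have ht1 : (1:ℚ) - t ≠ 0 := by intro hcon; rw [sub_eq_zero] at hcon; rw [← hcon] at h1; linarith
  rw [mem_level_succ]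
  constructor
  · rintro (h | ⟨hh0, -⟩ | ⟨hh1, -⟩)
    · rcases mem_levelUp.1 h with ⟨w, ⟨hwP, hw⟩, h⟩ | ⟨w, ⟨hwP, hw⟩, h⟩ |
        ⟨w, ⟨hwP, hw⟩, h⟩ | ⟨w, ⟨hwP, hw⟩, h⟩ | ⟨w, ⟨hwP, hw⟩, h⟩
      · obtain ⟨ha, hb⟩ := phi_comp0 h
        obtain ⟨hw1, hw2, hw3⟩ := hw
        have hd : (0:ℚ) < 1 + w.2 := by linarith
        have hab : (1:ℚ) / (1 + w.2) = w.1 / (1 + w.2) := by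
          show ((1:ℚ),(1:ℚ)).1 / (1 + w.2) = _
          rw [div_eq_div_iff (ne_of_gt hd) (ne_of_gt hd)]
          have := ha.trans hb.symm
          rw [div_eq_div_iff (ne_of_gt hd) (ne_of_gt hd)] at this
          exact this
        rw [div_eq_div_iff (ne_of_gt hd) (ne_of_gt hd)] at hab
        have : w.1 = 1 := by
          have := mul_right_cancel₀ (ne_of_gt hd) hab.symm
          simpa using this
        linarith
      · obtain ⟨ha, hb⟩ := phi_comp1 h
        obtain ⟨hw1, hw2, hw3⟩ := hw
        have hd : (0:ℚ) < 1 + w.2 := by linarith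
        have hab := ha.trans hb.symm
        rw [div_eq_div_iff (ne_of_gt hd) (ne_of_gt hd)] at hab
        have : w.1 = w.2 := mul_right_cancel₀ (ne_of_gt hd) hab
        linarith
      · obtain ⟨ha, hb⟩ := phi_comp1 h
        obtain ⟨hs0, hs1⟩ := good_diag (hgd w hwP) hw
        have hd : (0:ℚ) < 1 + w.2 := by rw [← hw]; linarith
        have ha' : w.1 / (1 + w.2) = t := ha
        have hw1 : w.1 = t / (1 - t) := by
          rw [div_eq_iff (ne_of_gt hd)] at ha'
          rw [← hw] at ha'
          rw [eq_div_iff ht1]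
          linear_combination ha' 
        have hweq : (t / (1 - t), t / (1 - t)) = w := by
          rw [Prod.ext_iff]
          exact ⟨hw1.symm, by rw [← hw]; exact hw1.symm⟩
        rwa [hweq]
      · obtain ⟨ha, hb⟩ := phi_comp0 h
        obtain ⟨hs0, hs1⟩ := good_right (hgd w hwP) hw
        have hd : (0:ℚ) < 1 + w.2 := by linarith
        have ha' : 1 / (1 + w.2) = t := ha
        have : (1:ℚ)/2 < 1/(1 + w.2) := by
          rw [div_lt_div_iff₀ (by norm_num) hd]; linarith
        rw [ha'] at this
        linarith
      · obtain ⟨ha, hb⟩ := phi_comp1 h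
        obtain ⟨hs0, hs1⟩ := good_right (hgd w hwP) hw
        have hd : (0:ℚ) < 1 + w.2 := by linarith
        have hab := ha.trans hb.symm
        rw [div_eq_div_iff (ne_of_gt hd) (ne_of_gt hd)] at hab
        have : w.1 = w.2 := mul_right_cancel₀ (ne_of_gt hd) hab
        rw [hw] at this
        linarith
    · have ht : t = 0 := hh0
      linarith
    · have ht : t = 1 := hh1
      linarith
  · intro hP
    refine Or.inl (mem_levelUp.2 (Or.inr (Or.inr (Or.inl ⟨_, ⟨hP, rfl⟩, ?_⟩))))
    rw [phi1, Prod.ext_iff]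
    have hd2 : (1:ℚ) - t > 0 := by linarith
    constructor <;>
      (show t / (1 - t) / (1 + t / (1 - t)) = t; field_simp <;> ring)

/-- R4/R3 downwards : large diagonal points come from `φ₀` of `x = 1` points. -/
lemma level_succ_diag_gt {t : ℚ} (h0 : 1/2 < t) (h1 : t < 1) {n : ℕ} :
    (t, t) ∈ treeLevel (n+1) ↔ ((1 - t) / t, (1 - t) / t) ∈ treeLevel n := by
  have hgd := good_level n
  have ht0 : (0:ℚ) < t := by linarith
  rw [mem_level_succ, ← right_iff_diag n ((1 - t) / t)]
  constructor
  · rintro (h | ⟨hh0, -⟩ | ⟨hh1, -⟩)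
    · rcases mem_levelUp.1 h with ⟨w, ⟨hwP, hw⟩, h⟩ | ⟨w, ⟨hwP, hw⟩, h⟩ |
        ⟨w, ⟨hwP, hw⟩, h⟩ | ⟨w, ⟨hwP, hw⟩, h⟩ | ⟨w, ⟨hwP, hw⟩, h⟩
      · obtain ⟨ha, hb⟩ := phi_comp0 h
        obtain ⟨hw1, hw2, hw3⟩ := hw
        have hd : (0:ℚ) < 1 + w.2 := by linarith
        have hab := ha.trans hb.symm
        rw [div_eq_div_iff (ne_of_gt hd) (ne_of_gt hd)] at hab
        have : (1:ℚ) = w.1 := mul_right_cancel₀ (ne_of_gt hd) hab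
        linarith
      · obtain ⟨ha, hb⟩ := phi_comp1 h
        obtain ⟨hw1, hw2, hw3⟩ := hw
        have hd : (0:ℚ) < 1 + w.2 := by linarith
        have hab := ha.trans hb.symm
        rw [div_eq_div_iff (ne_of_gt hd) (ne_of_gt hd)] at hab
        have : w.1 = w.2 := mul_right_cancel₀ (ne_of_gt hd) hab
        linarith
      · obtain ⟨ha, hb⟩ := phi_comp1 h
        obtain ⟨hs0, hs1⟩ := good_diag (hgd w hwP) hw
        have hd : (0:ℚ) < 1 + w.2 := by rw [← hw]; linarith
        have ha' : w.1 / (1 + w.2) = t := ha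
        have : t < 1/2 := by
          rw [← ha', div_lt_div_iff₀ hd (by norm_num), ← hw]; linarith
        linarith
      · obtain ⟨ha, hb⟩ := phi_comp0 h
        obtain ⟨hs0, hs1⟩ := good_right (hgd w hwP) hw
        have hd : (0:ℚ) < 1 + w.2 := by linarith
        have ha' : 1 / (1 + w.2) = t := ha
        have hw2 : w.2 = (1 - t) / t := by
          rw [eq_div_iff (ne_of_gt ht0), ← ha']
          field_simp <;> ring
        have hweq : ((1:ℚ), (1 - t) / t) = w := by
          rw [Prod.ext_iff]
          exact ⟨hw.symm, hw2.symm⟩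
        rwa [hweq]
      · obtain ⟨ha, hb⟩ := phi_comp1 h
        obtain ⟨hs0, hs1⟩ := good_right (hgd w hwP) hw
        have hd : (0:ℚ) < 1 + w.2 := by linarith
        have hab := ha.trans hb.symm
        rw [div_eq_div_iff (ne_of_gt hd) (ne_of_gt hd)] at hab
        have : w.1 = w.2 := mul_right_cancel₀ (ne_of_gt hd) hab
        rw [hw] at this
        linarith
    · have ht : t = 0 := hh0
      linarith
    · have ht : t = 1 := hh1
      linarith
  · intro hP
    refine Or.inl (mem_levelUp.2 (Or.inr (Or.inr (Or.inr (Or.inl ⟨_, ⟨hP, rfl⟩, ?_⟩)))))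
    rw [phi0, Prod.ext_iff]
    constructor <;>
      (show _ / (1 + ((1:ℚ), (1 - t) / t).2) = t; simp only []; field_simp <;> ring)

/-- The center of the triangle appears only at level `0`. -/
lemma level_succ_half {n : ℕ} : ((1:ℚ)/2, (1:ℚ)/2) ∉ treeLevel (n+1) := by
  intro h
  have hgd := good_level n
  rcases mem_level_succ.1 h with h | ⟨hh0, -⟩ | ⟨hh1, -⟩
  · rcases mem_levelUp.1 h with ⟨w, ⟨hwP, hw⟩, h⟩ | ⟨w, ⟨hwP, hw⟩, h⟩ |
      ⟨w, ⟨hwP, hw⟩, h⟩ | ⟨w, ⟨hwP, hw⟩, h⟩ | ⟨w, ⟨hwP, hw⟩, h⟩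
    · obtain ⟨ha, hb⟩ := phi_comp0 h
      obtain ⟨hw1, hw2, hw3⟩ := hw
      have hd : (0:ℚ) < 1 + w.2 := by linarith
      have hab := ha.trans hb.symm
      rw [div_eq_div_iff (ne_of_gt hd) (ne_of_gt hd)] at hab
      have : (1:ℚ) = w.1 := mul_right_cancel₀ (ne_of_gt hd) hab
      linarith
    · obtain ⟨ha, hb⟩ := phi_comp1 h
      obtain ⟨hw1, hw2, hw3⟩ := hw
      have hd : (0:ℚ) < 1 + w.2 := by linarith
      have hab := ha.trans hb.symm
      rw [div_eq_div_iff (ne_of_gt hd) (ne_of_gt hd)] at hab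
      have : w.1 = w.2 := mul_right_cancel₀ (ne_of_gt hd) hab
      linarith
    · obtain ⟨ha, hb⟩ := phi_comp1 h
      obtain ⟨hs0, hs1⟩ := good_diag (hgd w hwP) hw
      have hd : (0:ℚ) < 1 + w.2 := by rw [← hw]; linarith
      have ha' : w.1 / (1 + w.2) = 1/2 := ha
      have : w.1 = 1 := by
        rw [div_eq_div_iff hd.ne' (by norm_num : (2:ℚ) ≠ 0)] at ha'
        rw [← hw] at ha'
        linarith
      linarith
    · obtain ⟨ha, hb⟩ := phi_comp0 h
      obtain ⟨hs0, hs1⟩ := good_right (hgd w hwP) hw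
      have hd : (0:ℚ) < 1 + w.2 := by linarith
      have ha' : 1 / (1 + w.2) = 1/2 := ha
      have : w.2 = 1 := by
        rw [div_eq_div_iff hd.ne' (by norm_num : (2:ℚ) ≠ 0)] at ha'
        linarith
      linarith
    · obtain ⟨ha, hb⟩ := phi_comp1 h
      obtain ⟨hs0, hs1⟩ := good_right (hgd w hwP) hw
      have hd : (0:ℚ) < 1 + w.2 := by linarith
      have hab := ha.trans hb.symm
      rw [div_eq_div_iff (ne_of_gt hd) (ne_of_gt hd)] at hab
      have : w.1 = w.2 := mul_right_cancel₀ (ne_of_gt hd) hab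
      rw [hw] at this
      linarith
  · norm_num at hh0
  · norm_num at hh1

section Measure

/-- The least-common-denominator measure used for the well-founded recursion. -/
def mu (z : ℚ × ℚ) : ℕ := Nat.lcm z.1.den z.2.den

lemma mu_pos (z : ℚ × ℚ) : 0 < mu z :=
  Nat.lcm_pos z.1.den_pos z.2.den_pos

lemma int_cast_exists (x : ℚ) {c : ℕ} (h : x.den ∣ c) : ∃ m : ℤ, (m : ℚ) = x * c := by
  obtain ⟨k, hk⟩ := h
  refine ⟨x.num * k, ?_⟩
  have hden : (x.den : ℚ) ≠ 0 := by
    exact_mod_cast x.den_pos.ne'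
  have h1 : (x.num : ℚ) = x * x.den := (Rat.mul_den_eq_num x).symm
  subst hk
  push_cast
  rw [h1]; ring

lemma den_frac_dvd {u v : ℚ} {c : ℕ} (hc : (c : ℚ) ≠ 0) {m n : ℤ}
    (hm : (m : ℚ) = u * c) (hn : (n : ℚ) = v * c) (hu : u ≠ 0) :
    (v / u).den ∣ m.natAbs := by
  have h : v / u = (n : ℚ) / (m : ℚ) := by
    rw [hm, hn, mul_div_mul_right _ _ hc]
  rw [h, ← Rat.divInt_eq_div]
  have h2 := Rat.den_dvd n m
  have h3 : ((Rat.divInt n m).den : ℤ) ∣ (m.natAbs : ℤ) := Int.dvd_natAbs.2 h2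
  exact_mod_cast h3

lemma mu_lt_gt {z : ℚ × ℚ} (h1 : 0 < z.1) (h2 : z.1 < 1) :
    mu (z.2 / z.1, (1 - z.1) / z.1) < mu z := by
  have hcpos : 0 < mu z := mu_pos z
  have hcne : ((mu z : ℕ) : ℚ) ≠ 0 := by exact_mod_cast hcpos.ne'
  obtain ⟨m, hm⟩ := int_cast_exists z.1 (c := mu z) (Nat.dvd_lcm_left _ _)
  obtain ⟨n, hn⟩ := int_cast_exists z.2 (c := mu z) (Nat.dvd_lcm_right _ _)
  have hu : z.1 ≠ 0 := ne_of_gt h1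
  have d1 : (z.2 / z.1).den ∣ m.natAbs := den_frac_dvd hcne hm hn hu
  have d2 : ((1 - z.1) / z.1).den ∣ m.natAbs :=
    den_frac_dvd hcne hm (n := (mu z : ℤ) - m) (by push_cast; rw [hm]; ring) hu
  have hcq : (0:ℚ) < (mu z : ℚ) := by exact_mod_cast hcpos
  have hmpos : 0 < m := by
    have : (0:ℚ) < (m:ℚ) := by rw [hm]; exact mul_pos h1 hcq
    exact_mod_cast this
  have hmlt : (m:ℤ) < (mu z : ℤ) := by
    have : (m:ℚ) < (mu z : ℚ) := by rw [hm]; nlinarith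
    exact_mod_cast this
  have hd : Nat.lcm (z.2 / z.1).den ((1 - z.1) / z.1).den ∣ m.natAbs := Nat.lcm_dvd d1 d2
  exact lt_of_le_of_lt (Nat.le_of_dvd (by omega) hd) (by omega)

lemma mu_lt_lt {z : ℚ × ℚ} (h1 : 0 < z.2) (h2 : z.2 < 1) :
    mu (z.1 / (1 - z.2), z.2 / (1 - z.2)) < mu z := by
  have hcpos : 0 < mu z := mu_pos z
  have hcne : ((mu z : ℕ) : ℚ) ≠ 0 := by exact_mod_cast hcpos.ne'
  obtain ⟨m, hm⟩ := int_cast_exists z.1 (c := mu z) (Nat.dvd_lcm_left _ _)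
  obtain ⟨n, hn⟩ := int_cast_exists z.2 (c := mu z) (Nat.dvd_lcm_right _ _)
  have hu : (1:ℚ) - z.2 ≠ 0 := by intro hcon; rw [sub_eq_zero] at hcon; linarith
  have hm' : (((mu z : ℤ) - n : ℤ) : ℚ) = (1 - z.2) * (mu z) := by
    push_cast
    rw [hn]; ring
  have d1 : (z.1 / (1 - z.2)).den ∣ ((mu z : ℤ) - n).natAbs := den_frac_dvd hcne hm' hm hu
  have d2 : (z.2 / (1 - z.2)).den ∣ ((mu z : ℤ) - n).natAbs := den_frac_dvd hcne hm' hn hu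
  have hcq : (0:ℚ) < (mu z : ℚ) := by exact_mod_cast hcpos
  have hnpos : 0 < n := by
    have : (0:ℚ) < (n:ℚ) := by rw [hn]; exact mul_pos h1 hcq
    exact_mod_cast this
  have hnlt : (n:ℤ) < (mu z : ℤ) := by
    have : (n:ℚ) < (mu z : ℚ) := by rw [hn]; nlinarith
    exact_mod_cast this
  have hd : Nat.lcm (z.1 / (1 - z.2)).den (z.2 / (1 - z.2)).den ∣ ((mu z : ℤ) - n).natAbs :=
    Nat.lcm_dvd d1 d2
  exact lt_of_le_of_lt (Nat.le_of_dvd (by omega) hd) (by omega)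

lemma mu_lt_eq {z : ℚ × ℚ} (h1 : 0 < z.1) (h2 : z.1 < 1) :
    mu (z.2 / z.1, z.2 / z.1) < mu z := by
  have hcpos : 0 < mu z := mu_pos z
  have hcne : ((mu z : ℕ) : ℚ) ≠ 0 := by exact_mod_cast hcpos.ne'
  obtain ⟨m, hm⟩ := int_cast_exists z.1 (c := mu z) (Nat.dvd_lcm_left _ _)
  obtain ⟨n, hn⟩ := int_cast_exists z.2 (c := mu z) (Nat.dvd_lcm_right _ _)
  have hu : z.1 ≠ 0 := ne_of_gt h1
  have d1 : (z.2 / z.1).den ∣ m.natAbs := den_frac_dvd hcne hm hn hu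
  have hcq : (0:ℚ) < (mu z : ℚ) := by exact_mod_cast hcpos
  have hmpos : 0 < m := by
    have : (0:ℚ) < (m:ℚ) := by rw [hm]; exact mul_pos h1 hcq
    exact_mod_cast this
  have hmlt : (m:ℤ) < (mu z : ℤ) := by
    have : (m:ℚ) < (mu z : ℚ) := by rw [hm]; nlinarith
    exact_mod_cast this
  have hd : Nat.lcm (z.2 / z.1).den (z.2 / z.1).den ∣ m.natAbs := Nat.lcm_dvd d1 d1
  exact lt_of_le_of_lt (Nat.le_of_dvd (by omega) hd) (by omega)

lemma mu_diag_lt {t : ℚ} (h0 : 0 < t) (h1 : t < 1) :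
    mu (t / (1 - t), t / (1 - t)) < mu ((t, t) : ℚ × ℚ) := by
  have := mu_lt_lt (z := ((t, t) : ℚ × ℚ)) h0 h1
  exact this

lemma mu_diag_gt {t : ℚ} (h0 : 0 < t) (h1 : t < 1) :
    mu ((1 - t) / t, (1 - t) / t) < mu ((t, t) : ℚ × ℚ) := by
  have hcpos : 0 < mu ((t, t) : ℚ × ℚ) := mu_pos _
  have hcne : ((mu ((t, t) : ℚ × ℚ) : ℕ) : ℚ) ≠ 0 := by exact_mod_cast hcpos.ne'
  obtain ⟨m, hm⟩ := int_cast_exists t (c := mu ((t, t) : ℚ × ℚ))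
    (Nat.dvd_lcm_left t.den t.den)
  have hu : t ≠ 0 := ne_of_gt h0
  have hm' : (((mu ((t, t) : ℚ × ℚ) : ℤ) - m : ℤ) : ℚ) = (1 - t) * (mu ((t, t) : ℚ × ℚ)) := by
    push_cast
    rw [hm]; ring
  have d1 : ((1 - t) / t).den ∣ m.natAbs := den_frac_dvd hcne hm hm' hu
  have hcq : (0:ℚ) < (mu ((t, t) : ℚ × ℚ) : ℚ) := by exact_mod_cast hcpos
  have hmpos : 0 < m := by
    have : (0:ℚ) < (m:ℚ) := by rw [hm]; exact mul_pos h0 hcq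
    exact_mod_cast this
  have hmlt : (m:ℤ) < (mu ((t, t) : ℚ × ℚ) : ℤ) := by
    have : (m:ℚ) < (mu ((t, t) : ℚ × ℚ) : ℚ) := by rw [hm]; nlinarith
    exact_mod_cast this
  have hd : Nat.lcm ((1 - t) / t).den ((1 - t) / t).den ∣ m.natAbs := Nat.lcm_dvd d1 d1
  exact lt_of_le_of_lt (Nat.le_of_dvd (by omega) hd) (by omega)

end Measure

section Main

/-- Interior/diagonal points: the shape predicate used in the two inductions. -/
def di (z : ℚ × ℚ) : Prop := isInterior z ∨ ∃ t : ℚ, 0 < t ∧ t < 1 ∧ z = (t, t)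

lemma int_parent_gt {z : ℚ × ℚ} (hz : isInterior z) (hgt : 1 < z.1 + z.2) :
    isInterior (z.2 / z.1, (1 - z.1) / z.1) := by
  obtain ⟨hy, hyx, hx1⟩ := hz
  have hx0 : (0:ℚ) < z.1 := hy.trans hyx
  exact ⟨div_pos (by linarith) hx0, div_lt_div_of_pos_right (by linarith) hx0,
    (div_lt_one hx0).2 hyx⟩

lemma int_parent_lt {z : ℚ × ℚ} (hz : isInterior z) (hlt : z.1 + z.2 < 1) :
    isInterior (z.1 / (1 - z.2), z.2 / (1 - z.2)) := by
  obtain ⟨hy, hyx, hx1⟩ := hz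
  have hpos : (0:ℚ) < 1 - z.2 := by linarith
  exact ⟨div_pos hy hpos, div_lt_div_of_pos_right hyx hpos, (div_lt_one hpos).2 (by linarith)⟩

lemma level_zero_not_interior {z : ℚ × ℚ} (hz : isInterior z) : z ∉ treeLevel 0 := by
  intro h
  obtain ⟨hy, hyx, hx1⟩ := hz
  rcases mem_level_zero.1 h with rfl | rfl | rfl
  · norm_num at hy
  · norm_num at hx1
  · norm_num at hyx

lemma level_zero_diag {t : ℚ} (h : ((t, t) : ℚ × ℚ) ∈ treeLevel 0) : t = 1/2 := by
  rcases mem_level_zero.1 h with h | h | h <;> rw [Prod.mk.injEq] at h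
  · exact h.1
  · exact h.2
  · exact h.1

lemma half_mem_zero : (((1:ℚ)/2, (1:ℚ)/2) : ℚ × ℚ) ∈ treeLevel 0 :=
  mem_level_zero.2 (Or.inr (Or.inr rfl))

lemma unique_di : ∀ k : ℕ, ∀ z : ℚ × ℚ, mu z ≤ k → di z →
    ∀ m n : ℕ, z ∈ treeLevel m → z ∈ treeLevel n → m = n := by
  intro k
  induction k with
  | zero => intro z hk _ _ _ _ _; exact absurd (lt_of_lt_of_le (mu_pos z) hk) (lt_irrefl 0)
  | succ k ih =>
    intro z hk hdi m n hm hn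
    rcases hdi with hz | ⟨t, ht0, ht1, rfl⟩
    · -- interior
      cases m with
      | zero => exact absurd hm (level_zero_not_interior hz)
      | succ m =>
        cases n with
        | zero => exact absurd hn (level_zero_not_interior hz)
        | succ n =>
          obtain ⟨hy, hyx, hx1⟩ := hz
          have hx0 : (0:ℚ) < z.1 := hy.trans hyx
          rcases lt_trichotomy (z.1 + z.2) 1 with hc | hc | hc
          · have hm' := (level_succ_int_lt ⟨hy, hyx, hx1⟩ hc).1 hm
            have hn' := (level_succ_int_lt ⟨hy, hyx, hx1⟩ hc).1 hn
            have hmu : mu (z.1 / (1 - z.2), z.2 / (1 - z.2)) ≤ k := by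
              have := mu_lt_lt (z := z) hy (by linarith)
              omega
            exact congrArg Nat.succ
              (ih _ hmu (Or.inl (int_parent_lt ⟨hy, hyx, hx1⟩ hc)) m n hm' hn')
          · have hm' := (level_succ_int_eq ⟨hy, hyx, hx1⟩ hc).1 hm
            have hn' := (level_succ_int_eq ⟨hy, hyx, hx1⟩ hc).1 hn
            have hmu : mu (z.2 / z.1, z.2 / z.1) ≤ k := by
              have := mu_lt_eq (z := z) hx0 hx1
              omega
            have hdi' : di (z.2 / z.1, z.2 / z.1) :=
              Or.inr ⟨z.2 / z.1, div_pos hy hx0, (div_lt_one hx0).2 hyx, rfl⟩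
            exact congrArg Nat.succ (ih _ hmu hdi' m n hm' hn')
          · have hm' := (level_succ_int_gt ⟨hy, hyx, hx1⟩ hc).1 hm
            have hn' := (level_succ_int_gt ⟨hy, hyx, hx1⟩ hc).1 hn
            have hmu : mu (z.2 / z.1, (1 - z.1) / z.1) ≤ k := by
              have := mu_lt_gt (z := z) hx0 hx1
              omega
            exact congrArg Nat.succ
              (ih _ hmu (Or.inl (int_parent_gt ⟨hy, hyx, hx1⟩ hc)) m n hm' hn')
    · -- diagonal
      rcases lt_trichotomy t (1/2) with hc | hc | hc
      · cases m with
        | zero => exact absurd (level_zero_diag hm) (by linarith)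
        | succ m =>
          cases n with
          | zero => exact absurd (level_zero_diag hn) (by linarith)
          | succ n =>
            have hm' := (level_succ_diag_lt ht0 hc).1 hm
            have hn' := (level_succ_diag_lt ht0 hc).1 hn
            have hmu : mu (t / (1 - t), t / (1 - t)) ≤ k := by
              have := mu_diag_lt ht0 ht1
              omega
            have hdi' : di (t / (1 - t), t / (1 - t)) := by
              have hpos : (0:ℚ) < 1 - t := by linarith
              exact Or.inr ⟨t / (1 - t), div_pos ht0 hpos,
                (div_lt_one hpos).2 (by linarith), rfl⟩
            exact congrArg Nat.succ (ih _ hmu hdi' m n hm' hn')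
      · subst hc
        cases m with
        | zero =>
          cases n with
          | zero => rfl
          | succ n => exact absurd hn level_succ_half
        | succ m => exact absurd hm level_succ_half
      · cases m with
        | zero => exact absurd (level_zero_diag hm) (by linarith)
        | succ m =>
          cases n with
          | zero => exact absurd (level_zero_diag hn) (by linarith)
          | succ n =>
            have hm' := (level_succ_diag_gt hc ht1).1 hm
            have hn' := (level_succ_diag_gt hc ht1).1 hn
            have hmu : mu ((1 - t) / t, (1 - t) / t) ≤ k := by
              have := mu_diag_gt ht0 ht1
              omega
            have hdi' : di ((1 - t) / t, (1 - t) / t) := by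
              exact Or.inr ⟨(1 - t) / t, div_pos (by linarith) ht0,
                (div_lt_one ht0).2 (by linarith), rfl⟩
            exact congrArg Nat.succ (ih _ hmu hdi' m n hm' hn')

lemma exists_di : ∀ k : ℕ, ∀ z : ℚ × ℚ, mu z ≤ k → di z → ∃ n, z ∈ treeLevel n := by
  intro k
  induction k with
  | zero => intro z hk _; exact absurd (lt_of_lt_of_le (mu_pos z) hk) (lt_irrefl 0)
  | succ k ih =>
    intro z hk hdi
    rcases hdi with hz | ⟨t, ht0, ht1, rfl⟩
    · obtain ⟨hy, hyx, hx1⟩ := hz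
      have hx0 : (0:ℚ) < z.1 := hy.trans hyx
      rcases lt_trichotomy (z.1 + z.2) 1 with hc | hc | hc
      · have hmu : mu (z.1 / (1 - z.2), z.2 / (1 - z.2)) ≤ k := by
          have := mu_lt_lt (z := z) hy (by linarith)
          omega
        obtain ⟨n, hn⟩ := ih _ hmu (Or.inl (int_parent_lt ⟨hy, hyx, hx1⟩ hc))
        exact ⟨n + 1, (level_succ_int_lt ⟨hy, hyx, hx1⟩ hc).2 hn⟩
      · have hmu : mu (z.2 / z.1, z.2 / z.1) ≤ k := by
          have := mu_lt_eq (z := z) hx0 hx1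
          omega
        obtain ⟨n, hn⟩ := ih _ hmu
          (Or.inr ⟨z.2 / z.1, div_pos hy hx0, (div_lt_one hx0).2 hyx, rfl⟩)
        exact ⟨n + 1, (level_succ_int_eq ⟨hy, hyx, hx1⟩ hc).2 hn⟩
      · have hmu : mu (z.2 / z.1, (1 - z.1) / z.1) ≤ k := by
          have := mu_lt_gt (z := z) hx0 hx1
          omega
        obtain ⟨n, hn⟩ := ih _ hmu (Or.inl (int_parent_gt ⟨hy, hyx, hx1⟩ hc))
        exact ⟨n + 1, (level_succ_int_gt ⟨hy, hyx, hx1⟩ hc).2 hn⟩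
    · rcases lt_trichotomy t (1/2) with hc | hc | hc
      · have hpos : (0:ℚ) < 1 - t := by linarith
        have hmu : mu (t / (1 - t), t / (1 - t)) ≤ k := by
          have := mu_diag_lt ht0 ht1
          omega
        obtain ⟨n, hn⟩ := ih _ hmu
          (Or.inr ⟨t / (1 - t), div_pos ht0 hpos, (div_lt_one hpos).2 (by linarith), rfl⟩)
        exact ⟨n + 1, (level_succ_diag_lt ht0 hc).2 hn⟩
      · exact ⟨0, hc ▸ half_mem_zero⟩
      · have hmu : mu ((1 - t) / t, (1 - t) / t) ≤ k := by
          have := mu_diag_gt ht0 ht1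
          omega
        obtain ⟨n, hn⟩ := ih _ hmu
          (Or.inr ⟨(1 - t) / t, div_pos (by linarith) ht0, (div_lt_one ht0).2 (by linarith), rfl⟩)
        exact ⟨n + 1, (level_succ_diag_gt hc ht1).2 hn⟩

end Main

lemma good_tri {z : ℚ × ℚ} (h : good z) : 0 ≤ z.2 ∧ z.2 ≤ z.1 ∧ z.1 ≤ 1 := by
  rcases h with ⟨h1, h2, h3⟩ | ⟨h1, h2, h3⟩ | ⟨h1, h2, h3⟩ | ⟨h1, h2, h3⟩ <;>
    exact ⟨by linarith, by linarith, by linarith⟩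

lemma unique_all {z : ℚ × ℚ} {m n : ℕ} (hm : z ∈ treeLevel m) (hn : z ∈ treeLevel n) :
    m = n := by
  rcases good_level m z hm with h | ⟨h1, h2, h3⟩ | ⟨h1, h2, h3⟩ | ⟨h1, h2, h3⟩
  · exact unique_di (mu z) z le_rfl (Or.inl h) m n hm hn
  · have hz : z = (z.1, z.1) := by rw [Prod.ext_iff]; exact ⟨rfl, h3⟩
    exact unique_di (mu (z.1, z.1)) (z.1, z.1) le_rfl (Or.inr ⟨z.1, h1, h2, rfl⟩) m n
      (hz ▸ hm) (hz ▸ hn)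
  · have hz : z = (z.1, 0) := by rw [Prod.ext_iff]; exact ⟨rfl, h3⟩
    have hm' := (bottom_iff_diag m z.1).1 (hz ▸ hm)
    have hn' := (bottom_iff_diag n z.1).1 (hz ▸ hn)
    exact unique_di (mu (z.1, z.1)) (z.1, z.1) le_rfl (Or.inr ⟨z.1, h1, h2, rfl⟩) m n hm' hn'
  · have hz : z = (1, z.2) := by rw [Prod.ext_iff]; exact ⟨h1, rfl⟩
    have hm' := (right_iff_diag m z.2).1 (hz ▸ hm)
    have hn' := (right_iff_diag n z.2).1 (hz ▸ hn)
    exact unique_di (mu (z.2, z.2)) (z.2, z.2) le_rfl (Or.inr ⟨z.2, h2, h3, rfl⟩) m n hm' hn'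

/-- The triangular tree is complete: every pair of rational numbers in the closed
triangle `{1 ≥ x ≥ y ≥ 0}` appears in the tree, and exactly once (the levels are
pairwise disjoint). -/
theorem tree_complete :
    (treeLevelNegOne ∪ ⋃ n : ℕ, treeLevel n) =
      {z : ℚ × ℚ | 0 ≤ z.2 ∧ z.2 ≤ z.1 ∧ z.1 ≤ 1} ∧
    (∀ m n : ℕ, m ≠ n → Disjoint (treeLevel m) (treeLevel n)) ∧
    (∀ n : ℕ, Disjoint treeLevelNegOne (treeLevel n)) := by
  refine ⟨?_, ?_, ?_⟩
  · ext z
    simp only [Set.mem_union, Set.mem_iUnion, Set.mem_setOf_eq]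
    constructor
    · rintro (hv | ⟨n, hn⟩)
      · rcases hv with rfl | rfl | rfl <;> norm_num
      · exact good_tri (good_level n z hn)
    · rintro ⟨h0, h1, h2⟩
      by_cases hb : z.2 = 0
      · by_cases hz0 : z.1 = 0
        · refine Or.inl (Or.inl ?_)
          rw [Prod.ext_iff]; exact ⟨hz0, hb⟩
        · by_cases hz1 : z.1 = 1
          · refine Or.inl (Or.inr (Or.inl ?_))
            rw [Prod.ext_iff]; exact ⟨hz1, hb⟩
          · have hx0 : 0 < z.1 := lt_of_le_of_ne (hb ▸ h1) (Ne.symm hz0)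
            have hx1 : z.1 < 1 := lt_of_le_of_ne h2 hz1
            obtain ⟨n, hn⟩ := exists_di (mu ((z.1, z.1) : ℚ × ℚ)) (z.1, z.1) le_rfl
              (Or.inr ⟨z.1, hx0, hx1, rfl⟩)
            refine Or.inr ⟨n, ?_⟩
            have hz : z = (z.1, 0) := by rw [Prod.ext_iff]; exact ⟨rfl, hb⟩
            rw [hz]
            exact (bottom_iff_diag n z.1).2 hn
      · have h2pos : 0 < z.2 := lt_of_le_of_ne h0 (Ne.symm hb)
        by_cases hd : z.2 = z.1
        · by_cases hz1 : z.1 = 1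
          · refine Or.inl (Or.inr (Or.inr ?_))
            show z = ((1:ℚ), (1:ℚ))
            rw [Prod.ext_iff]; exact ⟨hz1, by rw [hd, hz1]⟩
          · have hz : z = (z.1, z.1) := by rw [Prod.ext_iff]; exact ⟨rfl, hd⟩
            obtain ⟨n, hn⟩ := exists_di (mu ((z.1, z.1) : ℚ × ℚ)) (z.1, z.1) le_rfl
              (Or.inr ⟨z.1, by linarith [hd ▸ h2pos], lt_of_le_of_ne h2 hz1, rfl⟩)
            exact Or.inr ⟨n, hz ▸ hn⟩
        · have hdlt : z.2 < z.1 := lt_of_le_of_ne h1 hd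
          by_cases hz1 : z.1 = 1
          · have hz : z = (1, z.2) := by rw [Prod.ext_iff]; exact ⟨hz1, rfl⟩
            obtain ⟨n, hn⟩ := exists_di (mu ((z.2, z.2) : ℚ × ℚ)) (z.2, z.2) le_rfl
              (Or.inr ⟨z.2, h2pos, by rw [← hz1]; exact hdlt, rfl⟩)
            refine Or.inr ⟨n, ?_⟩
            rw [hz]
            exact (right_iff_diag n z.2).2 hn
          · obtain ⟨n, hn⟩ := exists_di (mu z) z le_rfl
              (Or.inl ⟨h2pos, hdlt, lt_of_le_of_ne h2 hz1⟩)
            exact Or.inr ⟨n, hn⟩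
  · intro m n hmn
    rw [Set.disjoint_left]
    intro z hm hn
    exact hmn (unique_all hm hn)
  · intro n
    rw [Set.disjoint_left]
    intro z hv hn
    have hg := good_level n z hn
    rcases hv with rfl | rfl | rfl <;>
      simp only [good, isInterior] at hg <;> norm_num at hg
end

section
/- Every pair of rational numbers (x,y) ∈ ℚ² with 1 ≥ x ≥ y > 0 has a finite (terminating) triangle sequence; i.e. there exists n ≥ 1 such that Tⁿ(x,y) lies on the segment {y = 0}. -/
/-- The triangle map `T` on rational pairs: for `(x,y) ∈ △ₖ` (i.e. `k = ⌊(1-x)/y⌋`),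
`T(x,y) = (y/x, (1-x-ky)/x)`; points with `y = 0` are left fixed. -/
def triangleMap (z : ℚ × ℚ) : ℚ × ℚ :=
  if z.2 = 0 then z
  else (z.2 / z.1, (1 - z.1 - (⌊(1 - z.1) / z.2⌋ : ℚ) * z.2) / z.1)

lemma triangle_key : ∀ c : ℕ, 0 < c → ∀ x y : ℚ, 0 < y → y ≤ x → x ≤ 1 →
    (∃ a : ℤ, x = (a : ℚ) / c) → (∃ b : ℤ, y = (b : ℚ) / c) →
    ∃ n : ℕ, 1 ≤ n ∧ (triangleMap^[n] (x, y)).2 = 0 := by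
  intro c
  induction c using Nat.strong_induction_on with
  | _ c ih =>
    rintro hc x y hy hyx hx1 ⟨a, ha⟩ ⟨b, hb⟩
    have hcQ : (0:ℚ) < c := by exact_mod_cast hc
    have hxpos : 0 < x := lt_of_lt_of_le hy hyx
    have hxne : x ≠ 0 := ne_of_gt hxpos
    have hyne : y ≠ 0 := ne_of_gt hy
    set k : ℤ := ⌊(1 - x) / y⌋ with hk
    have hstep : triangleMap (x, y) = (y / x, (1 - x - (k:ℚ) * y) / x) := by
      simp [triangleMap, hyne, hk]
    have hfl : ((k:ℚ)) ≤ (1 - x) / y := Int.floor_le _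
    have hfl2 : (1 - x) / y < (k:ℚ) + 1 := Int.lt_floor_add_one _
    have hky : (k:ℚ) * y ≤ 1 - x := (le_div_iff₀ hy).mp hfl
    have hky2 : 1 - x - (k:ℚ) * y < y := by
      have : 1 - x < ((k:ℚ) + 1) * y := by
        rw [div_lt_iff₀ hy] at hfl2; linarith
      nlinarith
    have hy'0 : 0 ≤ 1 - x - (k:ℚ) * y := by linarith
    by_cases h0 : (1 - x - (k:ℚ) * y) = 0
    · exact ⟨1, le_refl 1, by simp [hstep, h0]⟩
    · have hnum : 0 < 1 - x - (k:ℚ) * y := lt_of_le_of_ne hy'0 (Ne.symm h0)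
      have hknn : 0 ≤ k := Int.floor_nonneg.mpr (div_nonneg (by linarith) (le_of_lt hy))
      have hkynn : 0 ≤ (k:ℚ) * y :=
        mul_nonneg (by exact_mod_cast hknn) (le_of_lt hy)
      have hxlt1 : x < 1 := by linarith
      -- integer facts
      have haQ : (a : ℚ) = c * x := by rw [ha]; field_simp
      have hbQ : (b : ℚ) = c * y := by rw [hb]; field_simp
      have hapos : 0 < a := by
        have : (0:ℚ) < (a:ℚ) := by rw [haQ]; positivity
        exact_mod_cast this
      have hac : a < (c : ℤ) := by
        have : (a:ℚ) < (c:ℚ) := by rw [haQ]; nlinarith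
        exact_mod_cast this
      set c' : ℕ := a.toNat with hc'
      have hc'Q : ((c' : ℕ) : ℚ) = (a : ℚ) := by
        rw [hc']; exact_mod_cast congrArg (Int.cast : ℤ → ℚ) (Int.toNat_of_nonneg hapos.le)
      have hc'pos : 0 < c' := by rw [hc']; omega
      have hc'lt : c' < c := by rw [hc']; omega
      have haQ' : (a:ℚ) ≠ 0 := by rw [haQ]; positivity
      -- new coordinates
      have hx' : y / x = (b : ℚ) / c' := by
        rw [hc'Q, ha, hb]; field_simp
      have hy' : (1 - x - (k:ℚ) * y) / x = ((c - a - k * b : ℤ) : ℚ) / c' := by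
        rw [hc'Q, ha, hb]; push_cast; field_simp
      have hx'le : y / x ≤ 1 := (div_le_one hxpos).mpr hyx
      have hy'pos : 0 < (1 - x - (k:ℚ) * y) / x := div_pos hnum hxpos
      have hy'le : (1 - x - (k:ℚ) * y) / x ≤ y / x := by
        gcongr
      obtain ⟨n, hn1, hn2⟩ := ih c' hc'lt hc'pos (y / x) ((1 - x - (k:ℚ) * y) / x)
        hy'pos hy'le hx'le ⟨b, hx'⟩ ⟨c - a - k * b, hy'⟩
      refine ⟨n + 1, by omega, ?_⟩
      rw [Function.iterate_succ_apply, hstep]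
      exact hn2

/-- Every rational pair `(x,y)` with `1 ≥ x ≥ y > 0` has a finite (terminating)
triangle sequence: some iterate of `T` lands on the segment `{y = 0}`. -/
theorem rational_pair_finite_triangle_sequence
    (z : ℚ × ℚ) (h0 : 0 < z.2) (h1 : z.2 ≤ z.1) (h2 : z.1 ≤ 1) :
    ∃ n : ℕ, 1 ≤ n ∧ (triangleMap^[n] z).2 = 0 := by
  have hd1 : (0:ℚ) < z.1.den := by exact_mod_cast z.1.pos
  have hd2 : (0:ℚ) < z.2.den := by exact_mod_cast z.2.pos
  have hc : 0 < z.1.den * z.2.den := Nat.mul_pos z.1.pos z.2.pos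
  have ha : z.1 = ((z.1.num * z.2.den : ℤ) : ℚ) / ((z.1.den * z.2.den : ℕ) : ℚ) := by
    push_cast
    rw [mul_div_mul_right _ _ (ne_of_gt hd2), Rat.num_div_den]
  have hb : z.2 = ((z.2.num * z.1.den : ℤ) : ℚ) / ((z.1.den * z.2.den : ℕ) : ℚ) := by
    push_cast
    rw [mul_comm (z.1.den : ℚ), mul_div_mul_right _ _ (ne_of_gt hd1), Rat.num_div_den]
  have := triangle_key (z.1.den * z.2.den) hc z.1 z.2 h0 h1 h2
    ⟨z.1.num * z.2.den, ha⟩ ⟨z.2.num * z.1.den, hb⟩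
  simpa using this
end

section
/- The wandering rate of the set Γ₀ satisfies w_n(Γ₀) = Σ_{k=0}^{n−1} μ(△ₖ) = ∫₀ⁿ log(1+v)/v dv, and in particular w_n(Γ₀) ≍ log² n (i.e. the ratio w_n(Γ₀)/log²n is bounded above and below by positive constants for large n). -/
open MeasureTheory

namespace WanderingAux
open Set intervalIntegral

def triN (n : ℕ) : Set (ℝ × ℝ) :=
  {p : ℝ × ℝ | 1 ≥ p.1 ∧ p.1 ≥ p.2 ∧ p.2 > 0 ∧ 1 - p.1 - (n : ℝ) * p.2 < 0}

noncomputable def myPhi (p : ℝ × ℝ) : ℝ × ℝ := ((1 + p.1 * p.2)⁻¹, p.1 * (1 + p.1 * p.2)⁻¹)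

def sqN (n : ℕ) : Set (ℝ × ℝ) := Ioc (0:ℝ) 1 ×ˢ Ico (0:ℝ) (n:ℝ)

noncomputable def myD (p : ℝ × ℝ) : ℝ × ℝ →L[ℝ] ℝ :=
  0 + (p.1 • ContinuousLinearMap.snd ℝ ℝ ℝ + p.2 • ContinuousLinearMap.fst ℝ ℝ ℝ)

noncomputable def myA (p : ℝ × ℝ) : ℝ × ℝ →L[ℝ] ℝ × ℝ :=
  (-((1 + p.1 * p.2) ^ 2)⁻¹ • myD p).prod
  (p.1 • (-((1 + p.1 * p.2) ^ 2)⁻¹ • myD p) + (1 + p.1 * p.2)⁻¹ • ContinuousLinearMap.fst ℝ ℝ ℝ)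

lemma hasFDerivAt_myPhi (p : ℝ × ℝ) (h : 1 + p.1 * p.2 ≠ 0) :
    HasFDerivAt myPhi (myA p) p := by
  have h1 : HasFDerivAt (fun q : ℝ × ℝ => 1 + q.1 * q.2) (myD p) p :=
    (hasFDerivAt_const 1 p).add (hasFDerivAt_fst.mul hasFDerivAt_snd)
  have h2 : HasFDerivAt (fun q : ℝ × ℝ => (1 + q.1 * q.2)⁻¹)
      (-((1 + p.1 * p.2) ^ 2)⁻¹ • myD p) p := (hasDerivAt_inv h).comp_hasFDerivAt p h1
  exact h2.prodMk (hasFDerivAt_fst.mul h2)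

lemma det_clm (L : ℝ×ℝ →L[ℝ] ℝ×ℝ) :
    LinearMap.det (L : ℝ×ℝ →ₗ[ℝ] ℝ×ℝ) =
      (L (1,0)).1 * (L (0,1)).2 - (L (0,1)).1 * (L (1,0)).2 := by
  rw [← LinearMap.det_toMatrix (Module.Basis.finTwoProd ℝ), Matrix.det_fin_two]
  simp [LinearMap.toMatrix_apply, Module.Basis.coe_finTwoProd_repr, Module.Basis.finTwoProd_zero,
    Module.Basis.finTwoProd_one]

lemma det_myA (p : ℝ × ℝ) (h : (0:ℝ) < 1 + p.1 * p.2) :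
    (myA p).det = p.1 / (1 + p.1 * p.2) ^ 3 := by
  have hd := det_clm (myA p)
  rw [ContinuousLinearMap.det, hd]
  simp only [myA, myD, ContinuousLinearMap.prod_apply, ContinuousLinearMap.add_apply,
    ContinuousLinearMap.smul_apply, ContinuousLinearMap.coe_fst', ContinuousLinearMap.coe_snd',
    ContinuousLinearMap.zero_apply]
  have h0 : (1 + p.1 * p.2) ≠ 0 := ne_of_gt h
  simp only [smul_eq_mul]
  field_simp
  ring

lemma measurableSet_triDelta (k : ℕ) : MeasurableSet (triDelta k) := by
  apply MeasurableSet.inter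
  · exact measurableSet_le measurable_fst measurable_const
  apply MeasurableSet.inter
  · exact measurableSet_le measurable_snd measurable_fst
  apply MeasurableSet.inter
  · exact measurableSet_lt measurable_const measurable_snd
  apply MeasurableSet.inter
  · exact measurableSet_le measurable_const
      (((measurable_const.sub measurable_fst)).sub (measurable_snd.const_mul _))
  · exact measurableSet_lt
      (((measurable_const.sub measurable_fst)).sub (measurable_snd.const_mul _)) measurable_const

lemma measurableSet_sqN (n : ℕ) : MeasurableSet (sqN n) :=
  measurableSet_Ioc.prod measurableSet_Ico

lemma pairwise_disjoint_triDelta (n : ℕ) :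
    (↑(Finset.range n) : Set ℕ).PairwiseDisjoint triDelta := by
  intro i hi j hj hij
  wlog h : i < j generalizing i j
  · exact (this hj hi hij.symm (by omega)).symm
  refine Set.disjoint_left.2 fun p hp hp' => ?_
  obtain ⟨_, _, hy, hi1, hi2⟩ := hp
  obtain ⟨_, _, _, hj1, _⟩ := hp'
  have : (i:ℝ) + 1 ≤ (j:ℝ) := by exact_mod_cast h
  nlinarith

lemma biUnion_triDelta (n : ℕ) : (⋃ k ∈ Finset.range n, triDelta k) = triN n := by
  ext p
  simp only [mem_iUnion, Finset.mem_range, triDelta, triN, mem_setOf_eq]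
  constructor
  · rintro ⟨k, hk, h1, h2, h3, h4, h5⟩
    refine ⟨h1, h2, h3, ?_⟩
    have : (k:ℝ) + 1 ≤ (n:ℝ) := by exact_mod_cast hk
    nlinarith
  · rintro ⟨h1, h2, h3, h4⟩
    set r := (1 - p.1) / p.2 with hr
    have hr0 : 0 ≤ r := div_nonneg (by linarith) h3.le
    refine ⟨⌊r⌋₊, ?_, h1, h2, h3, ?_, ?_⟩
    · rw [Nat.floor_lt hr0, hr, div_lt_iff₀ h3]
      nlinarith
    · have := Nat.floor_le hr0
      rw [hr, le_div_iff₀ h3] at this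
      nlinarith
    · have := Nat.lt_floor_add_one r
      rw [hr, div_lt_iff₀ h3] at this
      nlinarith

lemma image_myPhi (n : ℕ) : myPhi '' sqN n = triN n := by
  ext p
  constructor
  · rintro ⟨⟨u, v⟩, ⟨⟨hu0, hu1⟩, hv0, hvn⟩, rfl⟩
    have hg : (0:ℝ) < 1 + u * v := by nlinarith
    have hg1 : (1:ℝ) ≤ 1 + u * v := by nlinarith
    refine ⟨?_, ?_, ?_, ?_⟩
    · exact inv_le_one_of_one_le₀ hg1
    · simp only [myPhi]
      have : u * (1 + u * v)⁻¹ ≤ 1 * (1 + u * v)⁻¹ := by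
        apply mul_le_mul_of_nonneg_right hu1 (inv_nonneg.2 hg.le)
      simpa using this
    · simp only [myPhi]
      positivity
    · simp only [myPhi]
      have ht : (1 + u * v)⁻¹ * (1 + u * v) = 1 := inv_mul_cancel₀ hg.ne'
      have ht0 : (0:ℝ) < (1 + u * v)⁻¹ := inv_pos.2 hg
      have key : u * (1 + u * v)⁻¹ * v < (n:ℝ) * (u * (1 + u * v)⁻¹) := by
        have := mul_lt_mul_of_pos_left hvn (mul_pos hu0 ht0)
        linarith [this]
      nlinarith [key, ht]
  · rintro ⟨h1, h2, h3, h4⟩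
    have hx0 : (0:ℝ) < p.1 := lt_of_lt_of_le h3 h2
    refine ⟨(p.2 / p.1, (1 - p.1) / p.2), ⟨⟨?_, ?_⟩, ?_, ?_⟩, ?_⟩
    · exact div_pos h3 hx0
    · exact div_le_one_of_le₀ h2 hx0.le
    · exact div_nonneg (by linarith) h3.le
    · rw [div_lt_iff₀ h3]; nlinarith
    · have hkey : 1 + p.2 / p.1 * ((1 - p.1) / p.2) = p.1⁻¹ := by
        field_simp; ring
      simp only [myPhi, hkey, inv_inv]
      have : p.2 / p.1 * p.1 = p.2 := div_mul_cancel₀ _ hx0.ne'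
      exact Prod.ext rfl (by simpa using this)

lemma injOn_myPhi (n : ℕ) : Set.InjOn myPhi (sqN n) := by
  rintro ⟨u, v⟩ ⟨⟨hu0, _⟩, hv0, _⟩ ⟨u', v'⟩ ⟨⟨hu0', _⟩, hv0', _⟩ h
  simp only [myPhi, Prod.mk.injEq] at h
  obtain ⟨h1, h2⟩ := h
  have hg : (0:ℝ) < 1 + u * v := by nlinarith
  have hg' : (0:ℝ) < 1 + u' * v' := by nlinarith
  have hgg : 1 + u * v = 1 + u' * v' := by
    have := congrArg (·⁻¹) h1
    simpa [inv_inv] using this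
  have hu : u = u' := by
    rw [hgg] at h2
    exact mul_right_cancel₀ (inv_ne_zero hg'.ne') h2
  have hv : v = v' := by
    rw [hu] at hgg
    exact mul_left_cancel₀ hu0'.ne' (by linarith : u' * v = u' * v')
  simp [hu, hv]

lemma inner_int (u : ℝ) (hu : 0 < u) (n : ℕ) :
    ∫⁻ v in Ico (0:ℝ) (n:ℝ), ENNReal.ofReal (1/(1+u*v)) =
      ENNReal.ofReal (Real.log (1+u*n)/u) := by
  rw [Measure.restrict_congr_set Ico_ae_eq_Ioc]
  have hpos : ∀ v ∈ Icc (0:ℝ) (n:ℝ), (0:ℝ) < 1 + u * v := by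
    intro v hv; nlinarith [hv.1]
  have hcont : ContinuousOn (fun v : ℝ => 1/(1+u*v)) (Icc 0 (n:ℝ)) := by
    apply ContinuousOn.div continuousOn_const
    · exact (continuous_const.add (continuous_const.mul continuous_id)).continuousOn
    · intro v hv; exact (hpos v hv).ne'
  have hint : IntegrableOn (fun v : ℝ => 1/(1+u*v)) (Ioc 0 (n:ℝ)) volume :=
    (hcont.integrableOn_Icc).mono_set Ioc_subset_Icc_self
  rw [← ofReal_integral_eq_lintegral_ofReal hint]
  · congr 1
    rw [← intervalIntegral.integral_of_le (by positivity : (0:ℝ) ≤ (n:ℝ))]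
    have hFTC := intervalIntegral.integral_eq_sub_of_hasDerivAt
      (f := fun v : ℝ => u⁻¹ * Real.log (1+u*v)) (f' := fun v : ℝ => 1/(1+u*v))
      (a := (0:ℝ)) (b := (n:ℝ)) ?_ ?_
    · rw [hFTC]
      simp
      ring
    · intro v hv
      rw [uIcc_of_le (by positivity)] at hv
      have h1 : HasDerivAt (fun v : ℝ => 1 + u * v) u v := by
        simpa using ((hasDerivAt_id v).const_mul u).const_add 1
      have h2 := (h1.log (hpos v hv).ne').const_mul u⁻¹
      refine h2.congr_deriv ?_
      field_simp
    · exact (hcont.mono (uIcc_of_le (by positivity : (0:ℝ) ≤ (n:ℝ)) ▸ subset_rfl)).intervalIntegrable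
  · refine (ae_restrict_iff' measurableSet_Ioc).2 (ae_of_all _ fun v hv => ?_)
    have := hpos v ⟨hv.1.le, hv.2⟩
    positivity

lemma outer_int (n : ℕ) :
    ∫⁻ u in Ioc (0:ℝ) 1, ENNReal.ofReal (Real.log (1+u*n)/u) =
      ENNReal.ofReal (∫ u in (0:ℝ)..1, Real.log (1+u*n)/u) := by
  have hmeas : AEStronglyMeasurable (fun u : ℝ => Real.log (1+u*n)/u) volume := by
    apply Measurable.aestronglyMeasurable
    exact ((measurable_const.add (measurable_id.mul_const _)).log).div measurable_id
  have hnn : ∀ u ∈ Ioc (0:ℝ) 1, 0 ≤ Real.log (1+u*n)/u := by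
    intro u hu
    have h := Real.log_nonneg (by nlinarith [hu.1] : (1:ℝ) ≤ 1 + u*n)
    exact div_nonneg h hu.1.le
  have hbd : ∀ u ∈ Ioc (0:ℝ) 1, ‖Real.log (1+u*n)/u‖ ≤ (n:ℝ) := by
    intro u hu
    rw [Real.norm_eq_abs, abs_of_nonneg (hnn u hu)]
    have h1 : Real.log (1 + u*(n:ℝ)) ≤ u*n := by
      have := Real.log_le_sub_one_of_pos (by nlinarith [hu.1] : (0:ℝ) < 1 + u*n)
      linarith
    rw [div_le_iff₀ hu.1]
    nlinarith [hu.1]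
  have hint : IntegrableOn (fun u : ℝ => Real.log (1+u*n)/u) (Ioc (0:ℝ) 1) volume :=
    Measure.integrableOn_of_bounded (by simp) hmeas
      ((ae_restrict_iff' measurableSet_Ioc).2 (ae_of_all _ hbd))
  rw [← ofReal_integral_eq_lintegral_ofReal hint
    ((ae_restrict_iff' measurableSet_Ioc).2 (ae_of_all _ hnn)),
    ← intervalIntegral.integral_of_le zero_le_one]

lemma scale_int (n : ℕ) (hn : 1 ≤ n) :
    ∫ u in (0:ℝ)..1, Real.log (1+u*n)/u = ∫ v in (0:ℝ)..(n:ℝ), Real.log (1+v)/v := by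
  have hn0 : ((n:ℝ)) ≠ 0 := by positivity
  have key := intervalIntegral.mul_integral_comp_mul_left
    (a := (0:ℝ)) (b := 1) (c := (n:ℝ)) (f := fun v => Real.log (1+v)/v)
  simp only [mul_zero, mul_one] at key
  rw [← key, ← intervalIntegral.integral_const_mul]
  apply intervalIntegral.integral_congr_ae
  filter_upwards [] with u hu
  rw [uIoc_of_le zero_le_one] at hu
  have hu0 : u ≠ 0 := hu.1.ne'
  field_simp

lemma sq_lintegral (n : ℕ) (hn : 1 ≤ n) :
    ∫⁻ p in sqN n, ENNReal.ofReal (1/(1+p.1*p.2)) =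
      ENNReal.ofReal (∫ v in (0:ℝ)..(n:ℝ), Real.log (1+v)/v) := by
  have hrw : (volume : Measure (ℝ × ℝ)).restrict (sqN n) =
      (volume.restrict (Ioc (0:ℝ) 1)).prod (volume.restrict (Ico (0:ℝ) (n:ℝ))) := by
    rw [sqN, Measure.volume_eq_prod, Measure.prod_restrict]
  rw [hrw]
  have hmeas : AEMeasurable (fun p : ℝ × ℝ => ENNReal.ofReal (1/(1+p.1*p.2)))
      ((volume.restrict (Ioc (0:ℝ) 1)).prod (volume.restrict (Ico (0:ℝ) (n:ℝ)))) := by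
    apply Measurable.aemeasurable
    apply ENNReal.measurable_ofReal.comp
    exact measurable_const.div (measurable_const.add (measurable_fst.mul measurable_snd))
  rw [lintegral_prod _ hmeas]
  have step1 : ∫⁻ u in Ioc (0:ℝ) 1, (∫⁻ v in Ico (0:ℝ) (n:ℝ),
      ENNReal.ofReal (1/(1+u*v))) =
      ∫⁻ u in Ioc (0:ℝ) 1, ENNReal.ofReal (Real.log (1+u*n)/u) := by
    apply setLIntegral_congr_fun measurableSet_Ioc
    exact fun u hu => inner_int u hu.1 n
  rw [step1, outer_int n, scale_int n hn]

lemma part1 (n : ℕ) :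
    ∑ k ∈ Finset.range n,
        (∫⁻ p in triDelta k, ENNReal.ofReal (1 / (p.1 * p.2))
          ∂(volume : Measure (ℝ × ℝ))) =
      ENNReal.ofReal (∫ v in (0:ℝ)..(n:ℝ), Real.log (1 + v) / v) := by
  rcases Nat.eq_zero_or_pos n with rfl | hn
  · simp
  rw [← lintegral_biUnion_finset (pairwise_disjoint_triDelta n)
    (fun k _ => measurableSet_triDelta k), biUnion_triDelta n, ← image_myPhi n]
  rw [lintegral_image_eq_lintegral_abs_det_fderiv_mul volume (measurableSet_sqN n)
    (fun p hp => (hasFDerivAt_myPhi p (by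
      obtain ⟨⟨hu0, _⟩, hv0, _⟩ := hp
      nlinarith)).hasFDerivWithinAt) (injOn_myPhi n)]
  rw [← sq_lintegral n hn]
  apply setLIntegral_congr_fun (measurableSet_sqN n)
  refine fun p hp => ?_
  obtain ⟨⟨hu0, hu1⟩, hv0, hvn⟩ := hp
  have hg : (0:ℝ) < 1 + p.1 * p.2 := by nlinarith
  beta_reduce
  rw [det_myA p hg, abs_of_pos (by positivity)]
  simp only [myPhi]
  rw [← ENNReal.ofReal_mul (by positivity)]
  congr 1
  have h1 : (1 + p.1*p.2)⁻¹ * (p.1 * (1 + p.1*p.2)⁻¹) = p.1 / (1+p.1*p.2)^2 := by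
    rw [pow_two]; field_simp
  rw [h1]
  have hx : p.1 ≠ 0 := ne_of_gt hu0
  have hgne : (1 + p.1 * p.2) ≠ 0 := hg.ne'
  field_simp


lemma f_meas : Measurable (fun v : ℝ => Real.log (1+v)/v) :=
  ((measurable_const.add measurable_id).log).div measurable_id

lemma f_nonneg : ∀ v ∈ Ioc (0:ℝ) 1, 0 ≤ Real.log (1+v)/v := fun v hv =>
  div_nonneg (Real.log_nonneg (by linarith [hv.1])) hv.1.le

lemma f_le_one : ∀ v ∈ Ioc (0:ℝ) 1, Real.log (1+v)/v ≤ 1 := by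
  intro v hv
  rw [div_le_one hv.1]
  have := Real.log_le_sub_one_of_pos (by linarith [hv.1] : (0:ℝ) < 1 + v)
  linarith

lemma f_ii_01 : IntervalIntegrable (fun v : ℝ => Real.log (1+v)/v) volume 0 1 := by
  rw [intervalIntegrable_iff, uIoc_of_le zero_le_one]
  apply Measure.integrableOn_of_bounded (M := 1) (by simp) f_meas.aestronglyMeasurable
  refine (ae_restrict_iff' measurableSet_Ioc).2 (ae_of_all _ fun v hv => ?_)
  rw [Real.norm_eq_abs, abs_of_nonneg (f_nonneg v hv)]
  exact f_le_one v hv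

lemma int01_nonneg : 0 ≤ ∫ v in (0:ℝ)..1, Real.log (1+v)/v := by
  apply intervalIntegral.integral_nonneg_of_ae_restrict
  exact zero_le_one
  refine (ae_restrict_iff' measurableSet_Icc).2 (ae_of_all _ fun v hv => ?_)
  rcases eq_or_lt_of_le hv.1 with h | h
  · simp [← h]
  · exact f_nonneg v ⟨h, hv.2⟩

lemma int01_le_one : (∫ v in (0:ℝ)..1, Real.log (1+v)/v) ≤ 1 := by
  have h := intervalIntegral.integral_mono_on zero_le_one f_ii_01
    (_root_.intervalIntegrable_const (c := (1:ℝ)))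
    (fun v hv => by
      rcases eq_or_lt_of_le hv.1 with h | h
      · simp [← h]
      · exact f_le_one v ⟨h, hv.2⟩)
  simpa using h

lemma f_contOn (n : ℝ) : ContinuousOn (fun v : ℝ => Real.log (1+v)/v) (Icc 1 n) := by
  apply ContinuousOn.div
  · apply ContinuousOn.log ((continuous_const.add continuous_id).continuousOn)
    intro v hv; have := hv.1; intro h; simp at h; linarith
  · exact continuousOn_id
  · intro v hv; have := hv.1; intro h; linarith [h ▸ this]

lemma g1_contOn (n : ℝ) : ContinuousOn (fun v : ℝ => Real.log v / v) (Icc 1 n) := by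
  apply ContinuousOn.div
  · apply Real.continuousOn_log.mono
    intro v hv; have := hv.1; simp; linarith
  · exact continuousOn_id
  · intro v hv; have := hv.1; intro h; linarith [h ▸ this]

lemma g2_contOn (n : ℝ) :
    ContinuousOn (fun v : ℝ => (Real.log 2 + Real.log v) / v) (Icc 1 n) := by
  apply ContinuousOn.div
  · apply ContinuousOn.add continuousOn_const
    apply Real.continuousOn_log.mono
    intro v hv; have := hv.1; simp; linarith
  · exact continuousOn_id
  · intro v hv; have := hv.1; intro h; linarith [h ▸ this]

lemma int_g1 (n : ℝ) (hn : 1 ≤ n) :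
    ∫ v in (1:ℝ)..n, Real.log v / v = Real.log n ^ 2 / 2 := by
  have hFTC := intervalIntegral.integral_eq_sub_of_hasDerivAt
    (f := fun v : ℝ => Real.log v ^ 2 / 2) (f' := fun v : ℝ => Real.log v / v)
    (a := (1:ℝ)) (b := n) ?_ ?_
  · rw [hFTC]; simp
  · intro v hv
    rw [uIcc_of_le hn] at hv
    have hv0 : (0:ℝ) < v := lt_of_lt_of_le zero_lt_one hv.1
    have h := ((Real.hasDerivAt_log hv0.ne').pow 2).div_const 2
    refine h.congr_deriv ?_
    field_simp
    ring
  · exact ((g1_contOn n).mono (by rw [uIcc_of_le hn])).intervalIntegrable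
lemma int_g2 (n : ℝ) (hn : 1 ≤ n) :
    ∫ v in (1:ℝ)..n, (Real.log 2 + Real.log v) / v =
      Real.log 2 * Real.log n + Real.log n ^ 2 / 2 := by
  have hFTC := intervalIntegral.integral_eq_sub_of_hasDerivAt
    (f := fun v : ℝ => Real.log 2 * Real.log v + Real.log v ^ 2 / 2)
    (f' := fun v : ℝ => (Real.log 2 + Real.log v) / v)
    (a := (1:ℝ)) (b := n) ?_ ?_
  · rw [hFTC]; simp
  · intro v hv
    rw [uIcc_of_le hn] at hv
    have hv0 : (0:ℝ) < v := lt_of_lt_of_le zero_lt_one hv.1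
    have h := ((Real.hasDerivAt_log hv0.ne').const_mul (Real.log 2)).add
      (((Real.hasDerivAt_log hv0.ne').pow 2).div_const 2)
    refine h.congr_deriv ?_
    field_simp
    ring
  · exact ((g2_contOn n).mono (by rw [uIcc_of_le hn])).intervalIntegrable

lemma part2 : ∃ c₁ c₂ : ℝ, 0 < c₁ ∧ 0 < c₂ ∧ ∃ N : ℕ, ∀ n : ℕ, N ≤ n →
    c₁ * Real.log n ^ 2 ≤ (∫ v in (0:ℝ)..(n:ℝ), Real.log (1 + v) / v) ∧
    (∫ v in (0:ℝ)..(n:ℝ), Real.log (1 + v) / v) ≤ c₂ * Real.log n ^ 2 := by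
  refine ⟨1/2, 2, by norm_num, by norm_num, 8, fun n hn => ?_⟩
  have hn1 : (1:ℝ) ≤ (n:ℝ) := by exact_mod_cast (show 1 ≤ n by omega)
  have hn8 : (8:ℝ) ≤ (n:ℝ) := by exact_mod_cast hn
  have hL2 : (2:ℝ) ≤ Real.log n := by
    have h8 : Real.log 8 ≤ Real.log n := Real.log_le_log (by norm_num) hn8
    have : Real.log 8 = 3 * Real.log 2 := by
      rw [show (8:ℝ) = 2^3 by norm_num, Real.log_pow]; push_cast; ring
    nlinarith [Real.log_two_gt_d9]
  have hii1n : IntervalIntegrable (fun v : ℝ => Real.log (1+v)/v) volume 1 n :=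
    ((f_contOn n).mono (by rw [uIcc_of_le hn1])).intervalIntegrable
  have hsplit : (∫ v in (0:ℝ)..(n:ℝ), Real.log (1 + v) / v) =
      (∫ v in (0:ℝ)..1, Real.log (1 + v) / v) +
      (∫ v in (1:ℝ)..(n:ℝ), Real.log (1 + v) / v) :=
    (intervalIntegral.integral_add_adjacent_intervals f_ii_01 hii1n).symm
  have hlow : Real.log n ^ 2 / 2 ≤ ∫ v in (1:ℝ)..(n:ℝ), Real.log (1 + v) / v := by
    rw [← int_g1 n hn1]
    apply intervalIntegral.integral_mono_on hn1
      ((g1_contOn n).mono (by rw [uIcc_of_le hn1]) |>.intervalIntegrable) hii1n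
    intro v hv
    have hv0 : (0:ℝ) < v := lt_of_lt_of_le zero_lt_one hv.1
    have hlog : Real.log v ≤ Real.log (1+v) := Real.log_le_log hv0 (by linarith)
    gcongr
  have hupp : (∫ v in (1:ℝ)..(n:ℝ), Real.log (1 + v) / v) ≤
      Real.log 2 * Real.log n + Real.log n ^ 2 / 2 := by
    rw [← int_g2 n hn1]
    apply intervalIntegral.integral_mono_on hn1 hii1n
      ((g2_contOn n).mono (by rw [uIcc_of_le hn1]) |>.intervalIntegrable)
    intro v hv
    have hv0 : (0:ℝ) < v := lt_of_lt_of_le zero_lt_one hv.1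
    have hlog : Real.log (1+v) ≤ Real.log 2 + Real.log v := by
      have h1 : Real.log (1+v) ≤ Real.log (2*v) :=
        Real.log_le_log (by linarith) (by linarith [hv.1])
      rwa [Real.log_mul two_ne_zero hv0.ne'] at h1
    gcongr
  constructor
  · rw [hsplit]
    nlinarith [int01_nonneg, hlow]
  · rw [hsplit]
    nlinarith [int01_le_one, hupp, hL2, Real.log_two_lt_d9]

end WanderingAux

/-- The wandering rate of `Γ₀` satisfies
`wₙ(Γ₀) = Σ_{k<n} μ(△ₖ) = ∫₀ⁿ log(1+v)/v dv ≍ log² n`, where `μ` is the measure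
with density `1/(xy)`. -/
theorem wandering_rate_Gamma0 :
    (∀ n : ℕ,
      ∑ k ∈ Finset.range n,
        (∫⁻ p in triDelta k, ENNReal.ofReal (1 / (p.1 * p.2))
          ∂(volume : Measure (ℝ × ℝ))) =
      ENNReal.ofReal (∫ v in (0:ℝ)..(n:ℝ), Real.log (1 + v) / v)) ∧
    ∃ c₁ c₂ : ℝ, 0 < c₁ ∧ 0 < c₂ ∧ ∃ N : ℕ, ∀ n : ℕ, N ≤ n →
      c₁ * Real.log n ^ 2 ≤ (∫ v in (0:ℝ)..(n:ℝ), Real.log (1 + v) / v) ∧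
      (∫ v in (0:ℝ)..(n:ℝ), Real.log (1 + v) / v) ≤ c₂ * Real.log n ^ 2 := by
  exact ⟨WanderingAux.part1, WanderingAux.part2⟩
end
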